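/- arXiv:2008.12705 — 9 statements merged into one kernel-verified Lean document; each statement's English description precedes it below -/
import Mathlib

section
/- For every T in B(H) and all real α, β ≥ 0 with (α,β) ≠ (0,0), one has max{√(α+β)/2, √β} · ‖T‖ ≤ ‖T‖_{α,β} ≤ √(α+β) · ‖T‖. -/
open ContinuousLinearMap

variable {H : Type*} [NormedAddCommGroup H] [InnerProductSpace ℂ H] [CompleteSpace H]

/-- The numerical radius `w(T) = sup {|⟨Tx,x⟩| : ‖x‖ = 1}`. -/
noncomputable def numRad (T : H →L[ℂ] H) : ℝ :=
  sSup {r : ℝ | ∃ x : H, ‖x‖ = 1 ∧ r = ‖(inner ℂ (T x) x : ℂ)‖}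

/-- The `(α,β)`-norm `‖T‖_{α,β} = sup {√(α|⟨Tx,x⟩|² + β‖Tx‖²) : ‖x‖ = 1}`. -/
noncomputable def abNorm (α β : ℝ) (T : H →L[ℂ] H) : ℝ :=
  sSup {r : ℝ | ∃ x : H, ‖x‖ = 1 ∧
    r = Real.sqrt (α * ‖(inner ℂ (T x) x : ℂ)‖ ^ 2 + β * ‖T x‖ ^ 2)}

private lemma polarize (T : H →L[ℂ] H) (x y : H) :
    (4 : ℂ) * inner ℂ (T x) y =
      ((inner ℂ (T (x + y)) (x + y) : ℂ) - inner ℂ (T (x - y)) (x - y))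
        - Complex.I * ((inner ℂ (T (x + Complex.I • y)) (x + Complex.I • y) : ℂ)
          - inner ℂ (T (x - Complex.I • y)) (x - Complex.I • y)) := by
  simp only [map_add, map_sub, map_smul, inner_add_left, inner_add_right,
    inner_sub_left, inner_sub_right, inner_smul_left, inner_smul_right,
    Complex.conj_I, smul_eq_mul]
  ring_nf
  simp [Complex.I_sq]
  ring

set_option maxHeartbeats 1600000 in
/-- `max{√(α+β)/2, √β}·‖T‖ ≤ abNorm ∧ abNorm ≤ √(α+β)·‖T‖`. -/
theorem abNorm_opNorm_bounds (T : H →L[ℂ] H) (α β : ℝ) (hα : 0 ≤ α) (hβ : 0 ≤ β)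
    (hαβ : (α, β) ≠ (0, 0)) :
    max (Real.sqrt (α + β) / 2) (Real.sqrt β) * ‖T‖ ≤ abNorm α β T ∧
      abNorm α β T ≤ Real.sqrt (α + β) * ‖T‖ := by
  have hab : 0 < α + β := by
    rcases lt_or_eq_of_le hα with h | h
    · linarith
    rcases lt_or_eq_of_le hβ with h' | h'
    · linarith
    · exact absurd (by simp [← h, ← h']) hαβ
  set S := {r : ℝ | ∃ x : H, ‖x‖ = 1 ∧
    r = Real.sqrt (α * ‖(inner ℂ (T x) x : ℂ)‖ ^ 2 + β * ‖T x‖ ^ 2)} with hS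
  -- every element of S is ≤ √(α+β)‖T‖
  have hub : ∀ r ∈ S, r ≤ Real.sqrt (α + β) * ‖T‖ := by
    rintro r ⟨x, hx, rfl⟩
    have h1 : ‖(inner ℂ (T x) x : ℂ)‖ ≤ ‖T x‖ := by
      calc ‖(inner ℂ (T x) x : ℂ)‖ ≤ ‖T x‖ * ‖x‖ := norm_inner_le_norm _ _
        _ = ‖T x‖ := by rw [hx, mul_one]
    have h2 : ‖T x‖ ≤ ‖T‖ := by
      calc ‖T x‖ ≤ ‖T‖ * ‖x‖ := T.le_opNorm x
        _ = ‖T‖ := by rw [hx, mul_one]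
    have h0 : (0:ℝ) ≤ ‖(inner ℂ (T x) x : ℂ)‖ := norm_nonneg _
    have c2 : ‖(inner ℂ (T x) x : ℂ)‖ ^ 2 ≤ ‖T x‖ ^ 2 := pow_le_pow_left₀ h0 h1 2
    have d2 : ‖T x‖ ^ 2 ≤ ‖T‖ ^ 2 := pow_le_pow_left₀ (norm_nonneg _) h2 2
    have : α * ‖(inner ℂ (T x) x : ℂ)‖ ^ 2 + β * ‖T x‖ ^ 2 ≤ (α + β) * ‖T‖ ^ 2 := by
      have e1 : α * ‖(inner ℂ (T x) x : ℂ)‖ ^ 2 ≤ α * ‖T‖ ^ 2 :=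
        mul_le_mul_of_nonneg_left (le_trans c2 d2) hα
      have e2 : β * ‖T x‖ ^ 2 ≤ β * ‖T‖ ^ 2 := mul_le_mul_of_nonneg_left d2 hβ
      linarith
    calc Real.sqrt (α * ‖(inner ℂ (T x) x : ℂ)‖ ^ 2 + β * ‖T x‖ ^ 2)
        ≤ Real.sqrt ((α + β) * ‖T‖ ^ 2) := Real.sqrt_le_sqrt this
      _ = Real.sqrt (α + β) * ‖T‖ := by
          rw [Real.sqrt_mul hab.le, Real.sqrt_sq (norm_nonneg T)]
  have hbdd : BddAbove S := ⟨Real.sqrt (α + β) * ‖T‖, hub⟩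
  have habNonneg : 0 ≤ abNorm α β T :=
    Real.sSup_nonneg (by rintro r ⟨x, hx, rfl⟩; exact Real.sqrt_nonneg _)
  have hupper : abNorm α β T ≤ Real.sqrt (α + β) * ‖T‖ :=
    Real.sSup_le hub (mul_nonneg (Real.sqrt_nonneg _) (norm_nonneg T))
  refine ⟨?_, hupper⟩
  set K := abNorm α β T / Real.sqrt (α + β) with hKdef
  have hsab : 0 < Real.sqrt (α + β) := Real.sqrt_pos.2 hab
  have hKnn : 0 ≤ K := div_nonneg habNonneg hsab.le
  -- for unit x, √(α+β)·|⟨Tx,x⟩| ≤ abNorm, and √β·‖Tx‖ ≤ abNorm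
  have hmem : ∀ x : H, ‖x‖ = 1 →
      Real.sqrt (α * ‖(inner ℂ (T x) x : ℂ)‖ ^ 2 + β * ‖T x‖ ^ 2) ≤ abNorm α β T := by
    intro x hx
    exact le_csSup hbdd ⟨x, hx, rfl⟩
  have hK : ∀ x : H, ‖x‖ = 1 → ‖(inner ℂ (T x) x : ℂ)‖ ≤ K := by
    intro x hx
    rw [hKdef, le_div_iff₀ hsab, mul_comm]
    have h1 : ‖(inner ℂ (T x) x : ℂ)‖ ≤ ‖T x‖ := by
      calc ‖(inner ℂ (T x) x : ℂ)‖ ≤ ‖T x‖ * ‖x‖ := norm_inner_le_norm _ _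
        _ = ‖T x‖ := by rw [hx, mul_one]
    have key : Real.sqrt (α + β) * ‖(inner ℂ (T x) x : ℂ)‖
        = Real.sqrt ((α + β) * ‖(inner ℂ (T x) x : ℂ)‖ ^ 2) := by
      rw [Real.sqrt_mul hab.le, Real.sqrt_sq (norm_nonneg _)]
    rw [key]
    refine le_trans (Real.sqrt_le_sqrt ?_) (hmem x hx)
    have c2 : ‖(inner ℂ (T x) x : ℂ)‖ ^ 2 ≤ ‖T x‖ ^ 2 :=
      pow_le_pow_left₀ (norm_nonneg _) h1 2
    have e2 : β * ‖(inner ℂ (T x) x : ℂ)‖ ^ 2 ≤ β * ‖T x‖ ^ 2 :=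
      mul_le_mul_of_nonneg_left c2 hβ
    linarith
  -- scale to all vectors
  have hK' : ∀ u : H, ‖(inner ℂ (T u) u : ℂ)‖ ≤ K * ‖u‖ ^ 2 := by
    intro u
    rcases eq_or_ne u 0 with rfl | hu
    · simp
    · have hnu : (0:ℝ) < ‖u‖ := norm_pos_iff.2 hu
      set x := (‖u‖ : ℂ)⁻¹ • u with hxdef
      have hx : ‖x‖ = 1 := by
        rw [hxdef, norm_smul]
        simp [hnu.ne', norm_inv]
      have hinner : (inner ℂ (T x) x : ℂ) = ((‖u‖ : ℂ)⁻¹ * (starRingEnd ℂ) (‖u‖ : ℂ)⁻¹) * inner ℂ (T u) u := by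
        rw [hxdef]
        simp only [map_smul, inner_smul_left, inner_smul_right]
        ring
      have := hK x hx
      rw [hinner] at this
      rw [norm_mul] at this
      have hcc : ‖(‖u‖ : ℂ)⁻¹ * (starRingEnd ℂ) (‖u‖ : ℂ)⁻¹‖ = (‖u‖ ^ 2)⁻¹ := by
        rw [norm_mul, norm_inv, RingHomIsometric.norm_map, norm_inv]
        simp [Complex.norm_real, abs_of_pos hnu]
        rw [pow_two, mul_inv]
      rw [hcc] at this
      have h2 : (0:ℝ) < (‖u‖ ^ 2) := by positivity
      calc ‖(inner ℂ (T u) u : ℂ)‖ = (‖u‖^2)⁻¹ * ‖(inner ℂ (T u) u : ℂ)‖ * ‖u‖^2 := by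
            field_simp
        _ ≤ K * ‖u‖ ^ 2 := by
            apply mul_le_mul_of_nonneg_right this h2.le
  -- polarization bound
  have hpol : ∀ x y : H, ‖(inner ℂ (T x) y : ℂ)‖ ≤ K * (‖x‖ ^ 2 + ‖y‖ ^ 2) := by
    intro x y
    have h4 : (4:ℝ) * ‖(inner ℂ (T x) y : ℂ)‖ = ‖(4 : ℂ) * inner ℂ (T x) y‖ := by
      rw [norm_mul]; norm_num
    have hbd : ‖(4 : ℂ) * (inner ℂ (T x) y : ℂ)‖ ≤
        K * ‖x + y‖ ^ 2 + K * ‖x - y‖ ^ 2 + K * ‖x + Complex.I • y‖ ^ 2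
          + K * ‖x - Complex.I • y‖ ^ 2 := by
      rw [polarize T x y]
      have n1 := hK' (x + y)
      have n2 := hK' (x - y)
      have n3 := hK' (x + Complex.I • y)
      have n4 := hK' (x - Complex.I • y)
      calc ‖((inner ℂ (T (x + y)) (x + y) : ℂ) - inner ℂ (T (x - y)) (x - y))
            - Complex.I * ((inner ℂ (T (x + Complex.I • y)) (x + Complex.I • y) : ℂ)
              - inner ℂ (T (x - Complex.I • y)) (x - Complex.I • y))‖
          ≤ ‖((inner ℂ (T (x + y)) (x + y) : ℂ) - inner ℂ (T (x - y)) (x - y))‖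
            + ‖Complex.I * ((inner ℂ (T (x + Complex.I • y)) (x + Complex.I • y) : ℂ)
              - inner ℂ (T (x - Complex.I • y)) (x - Complex.I • y))‖ := norm_sub_le _ _
        _ ≤ (‖(inner ℂ (T (x + y)) (x + y) : ℂ)‖ + ‖(inner ℂ (T (x - y)) (x - y) : ℂ)‖)
            + (‖(inner ℂ (T (x + Complex.I • y)) (x + Complex.I • y) : ℂ)‖
              + ‖(inner ℂ (T (x - Complex.I • y)) (x - Complex.I • y) : ℂ)‖) := by
            gcongr
            · exact norm_sub_le _ _
            · rw [norm_mul, Complex.norm_I, one_mul]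
              exact norm_sub_le _ _
        _ ≤ K * ‖x + y‖ ^ 2 + K * ‖x - y‖ ^ 2 + K * ‖x + Complex.I • y‖ ^ 2
            + K * ‖x - Complex.I • y‖ ^ 2 := by linarith
    have hpar1 : ‖x + y‖ ^ 2 + ‖x - y‖ ^ 2 = 2 * (‖x‖ ^ 2 + ‖y‖ ^ 2) := by
      have := parallelogram_law_with_norm ℂ x y
      nlinarith [this]
    have hpar2 : ‖x + Complex.I • y‖ ^ 2 + ‖x - Complex.I • y‖ ^ 2 = 2 * (‖x‖ ^ 2 + ‖y‖ ^ 2) := by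
      have := parallelogram_law_with_norm ℂ x (Complex.I • y)
      have hIy : ‖Complex.I • y‖ = ‖y‖ := by
        rw [norm_smul, Complex.norm_I, one_mul]
      rw [hIy] at this
      nlinarith [this]
    nlinarith [hbd, h4]
  -- ‖T‖ ≤ 2K
  have hTle : ‖T‖ ≤ 2 * K := by
    apply opNorm_le_bound _ (by linarith) ?_
    intro u
    rcases eq_or_ne (T u) 0 with h0 | h0
    · rw [h0, norm_zero]; positivity
    rcases eq_or_ne u 0 with rfl | hu
    · simp at h0
    have hnu : (0:ℝ) < ‖u‖ := norm_pos_iff.2 hu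
    have hnTu : (0:ℝ) < ‖T u‖ := norm_pos_iff.2 h0
    set y := ((‖u‖ / ‖T u‖ : ℝ) : ℂ) • T u with hydef
    have hny : ‖y‖ = ‖u‖ := by
      rw [hydef, norm_smul, Complex.norm_real, Real.norm_eq_abs,
        abs_of_pos (by positivity), div_mul_cancel₀ _ hnTu.ne']
    have hinner : ‖(inner ℂ (T u) y : ℂ)‖ = ‖u‖ * ‖T u‖ := by
      rw [hydef, inner_smul_right, inner_self_eq_norm_sq_to_K, norm_mul,
        Complex.norm_real, Real.norm_eq_abs, abs_of_pos (by positivity)]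
      rw [norm_pow, RCLike.norm_ofReal, abs_of_pos hnTu]
      field_simp
    have := hpol u y
    rw [hinner, hny] at this
    have : ‖u‖ * ‖T u‖ ≤ 2 * K * ‖u‖ ^ 2 := by linarith [this]
    have := (mul_le_mul_iff_of_pos_left hnu).mp (by nlinarith : ‖u‖ * ‖T u‖ ≤ ‖u‖ * (2 * K * ‖u‖))
    linarith
  -- conclude lower bound
  have lower1 : Real.sqrt (α + β) / 2 * ‖T‖ ≤ abNorm α β T := by
    have : Real.sqrt (α + β) * ‖T‖ ≤ Real.sqrt (α + β) * (2 * K) :=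
      mul_le_mul_of_nonneg_left hTle hsab.le
    have h2 : Real.sqrt (α + β) * (2 * K) = 2 * abNorm α β T := by
      rw [hKdef]; field_simp
    have h3 : Real.sqrt (α + β) / 2 * ‖T‖ = Real.sqrt (α + β) * ‖T‖ / 2 := by ring
    rw [h3]
    linarith
  have lower2 : Real.sqrt β * ‖T‖ ≤ abNorm α β T := by
    rcases eq_or_lt_of_le hβ with h0 | hβpos
    · subst h0; simpa using habNonneg
    have hsb : 0 < Real.sqrt β := Real.sqrt_pos.2 hβpos
    have hTle2 : ‖T‖ ≤ abNorm α β T / Real.sqrt β := by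
      apply opNorm_le_bound _ (by positivity) ?_
      intro u
      rcases eq_or_ne u 0 with rfl | hu
      · simp
      have hnu : (0:ℝ) < ‖u‖ := norm_pos_iff.2 hu
      set x := (‖u‖ : ℂ)⁻¹ • u with hxdef
      have hx : ‖x‖ = 1 := by
        rw [hxdef, norm_smul]; simp [hnu.ne', norm_inv]
      have hTx : ‖T x‖ = ‖T u‖ / ‖u‖ := by
        rw [hxdef, map_smul, norm_smul, norm_inv]
        simp [abs_of_pos hnu, div_eq_inv_mul]
      have step : Real.sqrt β * ‖T x‖ ≤ abNorm α β T := by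
        have : Real.sqrt β * ‖T x‖ = Real.sqrt (β * ‖T x‖ ^ 2) := by
          rw [Real.sqrt_mul hβ, Real.sqrt_sq (norm_nonneg _)]
        rw [this]
        refine le_trans (Real.sqrt_le_sqrt ?_) (hmem x hx)
        nlinarith [norm_nonneg (inner ℂ (T x) x : ℂ), sq_nonneg ‖(inner ℂ (T x) x : ℂ)‖]
      rw [hTx] at step
      have h1 : ‖T u‖ / ‖u‖ ≤ abNorm α β T / Real.sqrt β := by
        rw [div_le_div_iff₀ hnu hsb]
        calc ‖T u‖ * Real.sqrt β = Real.sqrt β * (‖T u‖ / ‖u‖) * ‖u‖ := by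
              field_simp
          _ ≤ abNorm α β T * ‖u‖ :=
              mul_le_mul_of_nonneg_right step hnu.le
      calc ‖T u‖ = ‖T u‖ / ‖u‖ * ‖u‖ := by field_simp
        _ ≤ abNorm α β T / Real.sqrt β * ‖u‖ :=
            mul_le_mul_of_nonneg_right h1 hnu.le
    calc Real.sqrt β * ‖T‖ ≤ Real.sqrt β * (abNorm α β T / Real.sqrt β) :=
          mul_le_mul_of_nonneg_left hTle2 hsb.le
      _ = abNorm α β T := by field_simp
  rw [max_mul_of_nonneg _ _ (norm_nonneg T), max_le_iff]
  exact ⟨lower1, lower2⟩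
end

section
/- Let T ∈ B(H) and let α, β > 0. Then ‖T‖_{α,β} = √(α+4β) · w(T) if and only if T = 0. -/
open ContinuousLinearMap

variable {H : Type*} [NormedAddCommGroup H] [InnerProductSpace ℂ H] [CompleteSpace H]

local notation "⟪" x ", " y "⟫" => (inner ℂ x y : ℂ)

lemma selfAdj_norm_apply_le (S : H →L[ℂ] H) (hS : IsSelfAdjoint S) (w : ℝ)
    (hw : ∀ v : H, ‖⟪S v, v⟫‖ ≤ w * ‖v‖ ^ 2) {x : H} (hx : ‖x‖ = 1) :
    ‖S x‖ ≤ w := by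
  have hw0 : 0 ≤ w := by
    have := hw x
    rw [hx] at this
    simpa using le_trans (norm_nonneg _) this
  by_cases h0 : S x = 0
  · simp [h0, hw0]
  · have hn : ‖S x‖ ≠ 0 := norm_ne_zero_iff.mpr h0
    have hcn : ((‖S x‖ : ℝ) : ℂ) ≠ 0 := by exact_mod_cast hn
    set c : ℂ := ((‖S x‖⁻¹ : ℝ) : ℂ) with hc
    set y : H := c • S x with hy
    have hny : ‖y‖ = 1 := by
      rw [hy, norm_smul, hc]
      simp [norm_inv, inv_mul_cancel₀ hn]
    have hsymm := hS.isSymmetric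
    have e4 : ⟪S x, y⟫ = (‖S x‖ : ℂ) := by
      rw [hy, inner_smul_right, hc, inner_self_eq_norm_sq_to_K]
      push_cast
      field_simp [hcn]
      rfl
    have e3 : ⟪S y, x⟫ = (starRingEnd ℂ) ⟪S x, y⟫ := by
      have h := hsymm y x
      simp only [ContinuousLinearMap.coe_coe] at h
      rw [h, ← inner_conj_symm]
    have e1 : ⟪S (x + y), x + y⟫ = ⟪S x, x⟫ + ⟪S x, y⟫ + ⟪S y, x⟫ + ⟪S y, y⟫ := by
      simp only [map_add, inner_add_left, inner_add_right]
      ring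
    have e2 : ⟪S (x - y), x - y⟫ = ⟪S x, x⟫ - ⟪S x, y⟫ - ⟪S y, x⟫ + ⟪S y, y⟫ := by
      simp only [map_sub, inner_sub_left, inner_sub_right]
      ring
    have ediff : ⟪S (x + y), x + y⟫ - ⟪S (x - y), x - y⟫ = 2 * (⟪S x, y⟫ + ⟪S y, x⟫) := by
      rw [e1, e2]; ring
    have key : (⟪S (x + y), x + y⟫).re - (⟪S (x - y), x - y⟫).re = 4 * ‖S x‖ := by
      have h2 : (⟪S (x + y), x + y⟫ - ⟪S (x - y), x - y⟫).re = (2 * ((‖S x‖ : ℂ) + (starRingEnd ℂ) ((‖S x‖ : ℂ)))).re := by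
        rw [ediff, e3, e4]
      rw [Complex.sub_re] at h2
      rw [h2, Complex.conj_ofReal]
      push_cast
      simp
      ring
    have habs : ∀ v : H, |(⟪S v, v⟫).re| ≤ w * ‖v‖ ^ 2 := by
      intro v
      calc |(⟪S v, v⟫).re| ≤ ‖⟪S v, v⟫‖ := Complex.abs_re_le_norm _
        _ = ‖⟪S v, v⟫‖ := rfl
        _ ≤ w * ‖v‖ ^ 2 := hw v
    have b1 : (⟪S (x + y), x + y⟫).re ≤ w * ‖x + y‖ ^ 2 :=
      le_trans (le_abs_self _) (habs _)
    have b2 : -(w * ‖x - y‖ ^ 2) ≤ (⟪S (x - y), x - y⟫).re := by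
      have := habs (x - y)
      linarith [neg_abs_le (⟪S (x - y), x - y⟫).re]
    have par : ‖x + y‖ * ‖x + y‖ + ‖x - y‖ * ‖x - y‖ = 2 * (‖x‖ * ‖x‖ + ‖y‖ * ‖y‖) :=
      by simpa only [sq] using parallelogram_law_with_norm ℂ x y
    rw [hx, hny] at par
    have hsum : ‖x + y‖ ^ 2 + ‖x - y‖ ^ 2 = 4 := by
      rw [pow_two, pow_two]; linarith
    nlinarith [key, b1, b2, hsum, hw0]

lemma key_ineq (T : H →L[ℂ] H) (w : ℝ)
    (hw : ∀ v : H, ‖⟪T v, v⟫‖ ≤ w * ‖v‖ ^ 2) {x : H} (hx : ‖x‖ = 1) :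
    ‖⟪T x, x⟫‖ ^ 2 + ‖T x‖ ^ 2 ≤ 4 * w ^ 2 := by
  have hw0 : 0 ≤ w := by
    have := hw x; rw [hx] at this; simpa using le_trans (norm_nonneg _) this
  set T' := ContinuousLinearMap.adjoint T with hT'
  set A : H →L[ℂ] H := ((1 : ℂ)/2) • (T + T') with hA
  set B : H →L[ℂ] H := (Complex.I/2) • (T' - T) with hB
  have hadj : ∀ v : H, ⟪T' v, v⟫ = (starRingEnd ℂ) ⟪T v, v⟫ := by
    intro v
    rw [hT', adjoint_inner_left, ← inner_conj_symm]
  have hAsa : IsSelfAdjoint A := by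
    rw [IsSelfAdjoint, hA, star_smul, star_add]
    rw [star_eq_adjoint, star_eq_adjoint, ← hT', adjoint_adjoint]
    rw [show star ((1:ℂ)/2) = (1:ℂ)/2 by rw [Complex.star_def, map_div₀, map_one, Complex.conj_ofNat]]
    rw [add_comm]
  have hBsa : IsSelfAdjoint B := by
    rw [IsSelfAdjoint, hB, star_smul, star_sub]
    rw [star_eq_adjoint, star_eq_adjoint, ← hT', adjoint_adjoint]
    rw [show star (Complex.I/2) = -(Complex.I/2) by
      rw [Complex.star_def, map_div₀, Complex.conj_I, Complex.conj_ofNat]; ring]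
    rw [neg_smul, ← smul_neg, neg_sub]
  have hAv : ∀ v : H, ⟪A v, v⟫ = (((⟪T v, v⟫).re : ℝ) : ℂ) := by
    intro v
    have h1 : ⟪A v, v⟫ = (starRingEnd ℂ) ((1:ℂ)/2) * (⟪T v, v⟫ + (starRingEnd ℂ) ⟪T v, v⟫) := by
      rw [hA]
      simp only [ContinuousLinearMap.smul_apply, ContinuousLinearMap.add_apply]
      rw [inner_smul_left, inner_add_left, hadj v]
    rw [h1, Complex.add_conj]
    rw [show (starRingEnd ℂ) ((1:ℂ)/2) = 1/2 by rw [map_div₀, map_one, Complex.conj_ofNat]]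
    push_cast
    ring
  have hBv : ∀ v : H, ⟪B v, v⟫ = ((-(⟪T v, v⟫).im : ℝ) : ℂ) := by
    intro v
    have h1 : ⟪B v, v⟫ = (starRingEnd ℂ) (Complex.I/2) * ((starRingEnd ℂ) ⟪T v, v⟫ - ⟪T v, v⟫) := by
      rw [hB]
      simp only [ContinuousLinearMap.smul_apply, ContinuousLinearMap.sub_apply]
      rw [inner_smul_left, inner_sub_left, hadj v]
    rw [h1]
    rw [show (starRingEnd ℂ) (Complex.I/2) = -(Complex.I/2) by
      rw [map_div₀, Complex.conj_I, Complex.conj_ofNat]; ring]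
    have h2 : (starRingEnd ℂ) ⟪T v, v⟫ - ⟪T v, v⟫ = -(⟪T v, v⟫ - (starRingEnd ℂ) ⟪T v, v⟫) := by ring
    rw [h2, Complex.sub_conj]
    push_cast
    rw [Complex.ext_iff]
    constructor <;> simp [Complex.I_sq] <;> ring
  have hAb : ∀ v : H, ‖⟪A v, v⟫‖ ≤ w * ‖v‖ ^ 2 := by
    intro v
    rw [hAv v]
    refine le_trans ?_ (hw v)
    rw [Complex.norm_real, Real.norm_eq_abs]
    exact Complex.abs_re_le_norm _
  have hBb : ∀ v : H, ‖⟪B v, v⟫‖ ≤ w * ‖v‖ ^ 2 := by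
    intro v
    rw [hBv v]
    refine le_trans ?_ (hw v)
    rw [Complex.norm_real, Real.norm_eq_abs, abs_neg]
    exact Complex.abs_im_le_norm _
  have hAx : ‖A x‖ ≤ w := selfAdj_norm_apply_le A hAsa w hAb hx
  have hBx : ‖B x‖ ≤ w := selfAdj_norm_apply_le B hBsa w hBb hx
  have hII : Complex.I * (Complex.I/2) = -(1/2 : ℂ) := by
    rw [← mul_div_assoc, Complex.I_mul_I]; ring
  have hTx : T x = A x + Complex.I • B x := by
    rw [hA, hB]
    simp only [ContinuousLinearMap.smul_apply, ContinuousLinearMap.add_apply,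
      ContinuousLinearMap.sub_apply, smul_smul, hII]
    module
  have hT'x : T' x = A x - Complex.I • B x := by
    rw [hA, hB]
    simp only [ContinuousLinearMap.smul_apply, ContinuousLinearMap.add_apply,
      ContinuousLinearMap.sub_apply, smul_smul, hII]
    module
  have par : ‖T x‖ * ‖T x‖ + ‖T' x‖ * ‖T' x‖
      = 2 * (‖A x‖ * ‖A x‖ + ‖Complex.I • B x‖ * ‖Complex.I • B x‖) := by
    rw [hTx, hT'x]
    simpa only [sq] using parallelogram_law_with_norm ℂ (A x) (Complex.I • B x)
  have hIB : ‖Complex.I • B x‖ = ‖B x‖ := by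
    rw [norm_smul, Complex.norm_I, one_mul]
  rw [hIB] at par
  have hp : ‖⟪T x, x⟫‖ ≤ ‖T' x‖ := by
    have h2 : ‖⟪T' x, x⟫‖ = ‖⟪T x, x⟫‖ := by rw [hadj x, RCLike.norm_conj]
    calc ‖⟪T x, x⟫‖ = ‖⟪T' x, x⟫‖ := h2.symm
      _ ≤ ‖T' x‖ * ‖x‖ := norm_inner_le_norm _ _
      _ = ‖T' x‖ := by rw [hx, mul_one]
  nlinarith [norm_nonneg (T x), norm_nonneg (T' x), norm_nonneg (A x), norm_nonneg (B x),
    norm_nonneg (⟪T x, x⟫ : ℂ), hAx, hBx, hp, par]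

lemma unit_bound_to_all (T : H →L[ℂ] H) (w : ℝ)
    (hw : ∀ v : H, ‖v‖ = 1 → ‖⟪T v, v⟫‖ ≤ w) :
    ∀ v : H, ‖⟪T v, v⟫‖ ≤ w * ‖v‖ ^ 2 := by
  intro v
  by_cases h0 : v = 0
  · simp [h0]
  · have hn : ‖v‖ ≠ 0 := norm_ne_zero_iff.mpr h0
    set c : ℂ := ((‖v‖⁻¹ : ℝ) : ℂ) with hc
    set u : H := c • v with hu
    have hnu : ‖u‖ = 1 := by
      rw [hu, norm_smul, hc]
      simp [norm_inv, inv_mul_cancel₀ hn]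
    have hval : ⟪T u, u⟫ = (starRingEnd ℂ) c * (c * ⟪T v, v⟫) := by
      rw [hu, map_smul, inner_smul_left, inner_smul_right]
    have hnorm : ‖⟪T u, u⟫‖ = ‖v‖⁻¹ * (‖v‖⁻¹ * ‖⟪T v, v⟫‖) := by
      rw [hval, norm_mul, norm_mul, RCLike.norm_conj, hc]
      simp [abs_of_nonneg (norm_nonneg v)]
    have := hw u hnu
    rw [hnorm] at this
    have hv2 : (0:ℝ) < ‖v‖ := lt_of_le_of_ne (norm_nonneg v) (Ne.symm hn)
    rw [pow_two]
    calc ‖⟪T v, v⟫‖ = (‖v‖⁻¹ * (‖v‖⁻¹ * ‖⟪T v, v⟫‖)) * (‖v‖ * ‖v‖) := by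
          field_simp
        _ ≤ w * (‖v‖ * ‖v‖) := by
          apply mul_le_mul_of_nonneg_right this (by positivity)

/-- For `α, β > 0`, `‖T‖_{α,β} = √(α+4β)·w(T)` iff `T = 0`. -/
theorem abNorm_eq_sqrt_mul_numRad_iff (T : H →L[ℂ] H) (α β : ℝ) (hα : 0 < α) (hβ : 0 < β) :
    abNorm α β T = Real.sqrt (α + 4 * β) * numRad T ↔ T = 0 := by
  constructor
  · intro h
    rcases subsingleton_or_nontrivial H with hs | hn
    · ext v
      rw [Subsingleton.elim v 0]
      simp
    · obtain ⟨x₀, hx₀s⟩ := NormedSpace.sphere_nonempty (E := H) (x := 0) (r := 1) |>.mpr zero_le_one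
      have hx₀ : ‖x₀‖ = 1 := by simpa using mem_sphere_zero_iff_norm.mp hx₀s
      set w := numRad T with hwdef
      have hbdd : BddAbove {r : ℝ | ∃ x : H, ‖x‖ = 1 ∧ r = ‖⟪T x, x⟫‖} := by
        refine ⟨‖T‖, ?_⟩
        rintro r ⟨x, hx, rfl⟩
        calc ‖⟪T x, x⟫‖ ≤ ‖T x‖ * ‖x‖ := norm_inner_le_norm _ _
          _ ≤ ‖T‖ * ‖x‖ * ‖x‖ := by
              apply mul_le_mul_of_nonneg_right (T.le_opNorm x) (norm_nonneg x)
          _ = ‖T‖ := by rw [hx]; ring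
      have hunit : ∀ v : H, ‖v‖ = 1 → ‖⟪T v, v⟫‖ ≤ w := by
        intro v hv
        exact le_csSup hbdd ⟨v, hv, rfl⟩
      have hw0 : 0 ≤ w := le_trans (norm_nonneg _) (hunit x₀ hx₀)
      have hall : ∀ v : H, ‖⟪T v, v⟫‖ ≤ w * ‖v‖ ^ 2 := unit_bound_to_all T w hunit
      have hwzero : w = 0 := by
        by_contra hne
        have hwpos : 0 < w := lt_of_le_of_ne hw0 (Ne.symm hne)
        set K : ℝ := α + 4 * β - min α β with hK
        have hminpos : 0 < min α β := lt_min hα hβ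
        have hK0 : 0 ≤ K := by
          have h1 : min α β ≤ α := min_le_left α β
          nlinarith
        have hKlt : K < α + 4 * β := by nlinarith
        have hub : abNorm α β T ≤ Real.sqrt K * w := by
          unfold abNorm
          apply csSup_le
          · exact ⟨Real.sqrt (α * ‖⟪T x₀, x₀⟫‖ ^ 2 + β * ‖T x₀‖ ^ 2), ⟨x₀, hx₀, rfl⟩⟩
          rintro r ⟨x, hx, rfl⟩
          have hkey := key_ineq T w hall hx
          have hple := hunit x hx
          have hpn : 0 ≤ ‖⟪T x, x⟫‖ := norm_nonneg _
          have hp2 : ‖⟪T x, x⟫‖ ^ 2 ≤ w ^ 2 := by nlinarith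
          have hbound : α * ‖⟪T x, x⟫‖ ^ 2 + β * ‖T x‖ ^ 2 ≤ K * w ^ 2 := by
            rcases le_total α β with hab | hab
            · rw [hK, min_eq_left hab]
              nlinarith [mul_nonneg hβ.le (by linarith : (0:ℝ) ≤ 4 * w ^ 2 - ‖⟪T x, x⟫‖ ^ 2 - ‖T x‖ ^ 2),
                mul_nonneg (sub_nonneg.mpr hab) (sq_nonneg ‖⟪T x, x⟫‖)]
            · rw [hK, min_eq_right hab]
              nlinarith [mul_nonneg hβ.le (by linarith : (0:ℝ) ≤ 4 * w ^ 2 - ‖⟪T x, x⟫‖ ^ 2 - ‖T x‖ ^ 2),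
                mul_nonneg (sub_nonneg.mpr hab) (sub_nonneg.mpr hp2)]
          calc Real.sqrt (α * ‖⟪T x, x⟫‖ ^ 2 + β * ‖T x‖ ^ 2)
              ≤ Real.sqrt (K * w ^ 2) := Real.sqrt_le_sqrt hbound
            _ = Real.sqrt K * w := by
                rw [Real.sqrt_mul hK0, Real.sqrt_sq hw0]
        rw [h] at hub
        have hlt : Real.sqrt K < Real.sqrt (α + 4 * β) := Real.sqrt_lt_sqrt hK0 hKlt
        nlinarith [Real.sqrt_nonneg K, mul_pos (sub_pos.mpr hlt) hwpos]
      have hz : ∀ v : H, ⟪T v, v⟫ = 0 := by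
        intro v
        have h1 := hall v
        rw [hwzero] at h1
        have h2 : ‖⟪T v, v⟫‖ ≤ 0 := by simpa using h1
        exact norm_le_zero_iff.mp h2
      have h0 : (↑T : H →ₗ[ℂ] H) = 0 := (inner_map_self_eq_zero _).mp (fun v => hz v)
      exact ContinuousLinearMap.coe_injective (h0.trans (ContinuousLinearMap.coe_zero).symm)
  · rintro rfl
    rcases subsingleton_or_nontrivial H with hs | hn
    · have hempty : ∀ (f : H → ℝ), {r : ℝ | ∃ x : H, ‖x‖ = 1 ∧ r = f x} = ∅ := by
        intro f
        ext r
        simp only [Set.mem_setOf_eq, Set.mem_empty_iff_false, iff_false]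
        rintro ⟨x, hx, -⟩
        rw [Subsingleton.elim x 0] at hx
        simp at hx
      rw [abNorm, numRad, hempty, hempty, Real.sSup_empty, mul_zero]
    · obtain ⟨x₀, hx₀s⟩ := NormedSpace.sphere_nonempty (E := H) (x := 0) (r := 1) |>.mpr zero_le_one
      have hx₀ : ‖x₀‖ = 1 := by simpa using mem_sphere_zero_iff_norm.mp hx₀s
      have h1 : {r : ℝ | ∃ x : H, ‖x‖ = 1 ∧ r = ‖(inner ℂ ((0 : H →L[ℂ] H) x) x : ℂ)‖} = {0} := by
        ext r
        constructor
        · rintro ⟨x, hx, rfl⟩; simp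
        · intro hr
          exact ⟨x₀, hx₀, by simp [Set.mem_singleton_iff.mp hr]⟩
      have h2 : {r : ℝ | ∃ x : H, ‖x‖ = 1 ∧
          r = Real.sqrt (α * ‖(inner ℂ ((0 : H →L[ℂ] H) x) x : ℂ)‖ ^ 2 + β * ‖(0 : H →L[ℂ] H) x‖ ^ 2)} = {0} := by
        ext r
        constructor
        · rintro ⟨x, hx, rfl⟩; simp
        · intro hr
          exact ⟨x₀, hx₀, by simp [Set.mem_singleton_iff.mp hr]⟩
      rw [abNorm, numRad, h1, h2, csSup_singleton, mul_zero]
end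

section
/- The (α,β)-norm is preserved under the adjoint operation: for every T in B(H) and all real α, β ≥ 0 with (α,β) ≠ (0,0), ‖T*‖_{α,β} = ‖T‖_{α,β}. -/
open ContinuousLinearMap

variable {H : Type*} [NormedAddCommGroup H] [InnerProductSpace ℂ H] [CompleteSpace H]

lemma abNorm_nonneg' (α β : ℝ) (T : H →L[ℂ] H) : 0 ≤ abNorm α β T := by
  apply Real.sSup_nonneg
  rintro r ⟨x, hx, rfl⟩
  exact Real.sqrt_nonneg _

lemma abNorm_bddAbove (α β : ℝ) (hα : 0 ≤ α) (hβ : 0 ≤ β) (T : H →L[ℂ] H) :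
    BddAbove {r : ℝ | ∃ x : H, ‖x‖ = 1 ∧
      r = Real.sqrt (α * ‖(inner ℂ (T x) x : ℂ)‖ ^ 2 + β * ‖T x‖ ^ 2)} := by
  refine ⟨Real.sqrt (α * ‖T‖ ^ 2 + β * ‖T‖ ^ 2), ?_⟩
  rintro r ⟨x, hx, rfl⟩
  have hTx : ‖T x‖ ≤ ‖T‖ := by simpa [hx] using T.le_opNorm x
  have hin : ‖(inner ℂ (T x) x : ℂ)‖ ≤ ‖T‖ := by
    calc ‖(inner ℂ (T x) x : ℂ)‖ ≤ ‖T x‖ * ‖x‖ := norm_inner_le_norm _ _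
    _ = ‖T x‖ := by rw [hx, mul_one]
    _ ≤ ‖T‖ := hTx
  apply Real.sqrt_le_sqrt
  gcongr <;> first | exact norm_nonneg _ | assumption

lemma le_abNorm (α β : ℝ) (hα : 0 ≤ α) (hβ : 0 ≤ β) (T : H →L[ℂ] H) {y : H}
    (hy : ‖y‖ = 1) :
    Real.sqrt (α * ‖(inner ℂ (T y) y : ℂ)‖ ^ 2 + β * ‖T y‖ ^ 2) ≤ abNorm α β T :=
  le_csSup (abNorm_bddAbove α β hα hβ T) ⟨y, hy, rfl⟩

lemma sq_le_abNorm (α β : ℝ) (hα : 0 ≤ α) (hβ : 0 ≤ β) (T : H →L[ℂ] H) {y : H}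
    (hy : ‖y‖ = 1) :
    α * ‖(inner ℂ (T y) y : ℂ)‖ ^ 2 + β * ‖T y‖ ^ 2 ≤ (abNorm α β T) ^ 2 := by
  have h0 : (0:ℝ) ≤ α * ‖(inner ℂ (T y) y : ℂ)‖ ^ 2 + β * ‖T y‖ ^ 2 := by positivity
  have h := le_abNorm α β hα hβ T hy
  calc α * ‖(inner ℂ (T y) y : ℂ)‖ ^ 2 + β * ‖T y‖ ^ 2
      = (Real.sqrt (α * ‖(inner ℂ (T y) y : ℂ)‖ ^ 2 + β * ‖T y‖ ^ 2)) ^ 2 :=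
        (Real.sq_sqrt h0).symm
    _ ≤ (abNorm α β T) ^ 2 := by
        apply pow_le_pow_left₀ (Real.sqrt_nonneg _) h

set_option maxHeartbeats 1000000 in
lemma abNorm_adjoint_le (T : H →L[ℂ] H) (α β : ℝ) (hα : 0 ≤ α) (hβ : 0 ≤ β) :
    abNorm α β (adjoint T) ≤ abNorm α β T := by
  have hN0 : 0 ≤ abNorm α β T := abNorm_nonneg' α β T
  set N := abNorm α β T with hN
  refine Real.sSup_le ?_ hN0
  rintro r ⟨x, hx, rfl⟩
  have ha : ‖(inner ℂ ((adjoint T) x) x : ℂ)‖ = ‖(inner ℂ (T x) x : ℂ)‖ := by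
    rw [adjoint_inner_left]
    exact norm_inner_symm x (T x)
  rw [ha]
  set a := ‖(inner ℂ (T x) x : ℂ)‖ with hadef
  have ha0 : 0 ≤ a := norm_nonneg _
  have key : α * a ^ 2 + β * ‖(adjoint T) x‖ ^ 2 ≤ N ^ 2 := by
    rcases eq_or_lt_of_le hβ with hβ0 | hβpos
    · have h := sq_le_abNorm α β hα hβ T hx
      rw [← hadef] at h
      rw [hN, ← hβ0] at *
      simp only [zero_mul, add_zero] at h ⊢
      exact h
    · -- main case : β > 0
      set t := Real.sqrt α * a with htdef
      have ht0 : 0 ≤ t := mul_nonneg (Real.sqrt_nonneg _) ha0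
      have hsa : Real.sqrt α * Real.sqrt α = α := Real.mul_self_sqrt hα
      have ht2 : t ^ 2 = α * a ^ 2 := by
        rw [htdef, mul_pow]; rw [sq, hsa]
      set c := α * a / β with hcdef
      have hc0 : 0 ≤ c := by positivity
      have hβc : β * c = α * a := by
        rw [hcdef]; field_simp
      set w : ℂ := inner ℂ (T x) x with hwdef
      have hwa : ‖w‖ = a := rfl
      set z : ℂ := if w = 0 then 1 else w / (‖w‖ : ℂ) with hzdef
      have hz1 : ‖z‖ = 1 := by
        rw [hzdef]; split_ifs with h
        · simp
        · rw [norm_div, Complex.norm_real, norm_norm,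
            div_self (norm_ne_zero_iff.mpr h)]
      have hzw : (starRingEnd ℂ) z * w = (a : ℂ) := by
        rw [hzdef]; split_ifs with h
        · simp [h, ← hwa]
        · have han : a ≠ 0 := by rw [← hwa]; exact norm_ne_zero_iff.mpr h
          have hwaC : ((‖w‖ : ℝ) : ℂ) = (a : ℂ) := by rw [hwa]
          rw [map_div₀, Complex.conj_ofReal, hwaC, div_mul_eq_mul_div, mul_comm,
            Complex.mul_conj]
          rw [div_eq_iff (by exact_mod_cast han : (a : ℂ) ≠ 0)]
          norm_cast
          rw [Complex.normSq_eq_norm_sq, hwa]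
          ring
      set A : H →L[ℂ] H := (c : ℂ) • 1 + z • T with hAdef
      -- pointwise quadratic expansion of ‖A y‖
      have hAy : ∀ y : H, ‖A y‖ ^ 2
          = c ^ 2 * ‖y‖ ^ 2 + 2 * ((c : ℝ) * (z * (inner ℂ y (T y) : ℂ)).re) + ‖T y‖ ^ 2 := by
        intro y
        have h1 : A y = (c : ℂ) • y + z • T y := by
          simp [hAdef]
        rw [h1, @norm_add_sq ℂ]
        have h2 : (inner ℂ ((c : ℂ) • y) (z • T y) : ℂ) = (c : ℂ) * (z * (inner ℂ y (T y) : ℂ)) := by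
          rw [inner_smul_left, inner_smul_right, Complex.conj_ofReal]
        rw [h2]
        have h3 : ‖(c : ℂ) • y‖ = c * ‖y‖ := by
          rw [norm_smul, Complex.norm_real, Real.norm_eq_abs, abs_of_nonneg hc0]
        have h4 : ‖z • T y‖ = ‖T y‖ := by
          rw [norm_smul, hz1, one_mul]
        rw [h3, h4]
        have : RCLike.re ((c : ℂ) * (z * (inner ℂ y (T y) : ℂ))) = (c : ℝ) * (z * (inner ℂ y (T y) : ℂ)).re := by
          simp [RCLike.re_to_complex, Complex.mul_re, Complex.ofReal_re, Complex.ofReal_im]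
        rw [this]
        ring
      -- bound on unit vectors
      have hunit : ∀ u : H, ‖u‖ = 1 → ‖A u‖ ^ 2 ≤ c ^ 2 + (t ^ 2 + N ^ 2) / β := by
        intro u hu
        have h1 := hAy u
        rw [hu] at h1
        have h2 : (z * (inner ℂ u (T u) : ℂ)).re ≤ ‖(inner ℂ (T u) u : ℂ)‖ := by
          calc (z * (inner ℂ u (T u) : ℂ)).re ≤ ‖z * (inner ℂ u (T u) : ℂ)‖ := Complex.re_le_norm _
          _ = ‖(inner ℂ u (T u) : ℂ)‖ := by rw [norm_mul, hz1, one_mul]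
          _ = ‖(inner ℂ (T u) u : ℂ)‖ := norm_inner_symm u (T u)
      -- AM-GM step
        have h3 : 2 * (α * a) * ‖(inner ℂ (T u) u : ℂ)‖ ≤ t ^ 2 + α * ‖(inner ℂ (T u) u : ℂ)‖ ^ 2 := by
          have hs := sq_nonneg (t - Real.sqrt α * ‖(inner ℂ (T u) u : ℂ)‖)
          have he : (Real.sqrt α * ‖(inner ℂ (T u) u : ℂ)‖) ^ 2 = α * ‖(inner ℂ (T u) u : ℂ)‖ ^ 2 := by
            rw [mul_pow, sq, hsa]
          have ht' : t * (Real.sqrt α * ‖(inner ℂ (T u) u : ℂ)‖) = α * a * ‖(inner ℂ (T u) u : ℂ)‖ := by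
            rw [htdef]; linear_combination a * ‖(inner ℂ (T u) u : ℂ)‖ * hsa
          nlinarith [hs, he, ht']
        have h4 : α * ‖(inner ℂ (T u) u : ℂ)‖ ^ 2 + β * ‖T u‖ ^ 2 ≤ N ^ 2 :=
          sq_le_abNorm α β hα hβ T hu
        have h5 : 2 * (β * c) * ‖(inner ℂ (T u) u : ℂ)‖ + β * ‖T u‖ ^ 2 ≤ t ^ 2 + N ^ 2 := by
          rw [hβc]; linarith [h3, h4]
        have h7 : c * (z * (inner ℂ u (T u) : ℂ)).re ≤ c * ‖(inner ℂ (T u) u : ℂ)‖ :=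
          mul_le_mul_of_nonneg_left h2 hc0
        have h6 : 2 * (c * (z * (inner ℂ u (T u) : ℂ)).re) + ‖T u‖ ^ 2 ≤ (t ^ 2 + N ^ 2) / β := by
          rw [le_div_iff₀ hβpos]
          have h8 : (2 * (c * ‖(inner ℂ (T u) u : ℂ)‖) + ‖T u‖ ^ 2) * β ≤ t ^ 2 + N ^ 2 := by
            have he : (2 * (c * ‖(inner ℂ (T u) u : ℂ)‖) + ‖T u‖ ^ 2) * β
                = 2 * (β * c) * ‖(inner ℂ (T u) u : ℂ)‖ + β * ‖T u‖ ^ 2 := by ring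
            rw [he]; exact h5
          have h9 : (2 * (c * (z * (inner ℂ u (T u) : ℂ)).re) + ‖T u‖ ^ 2) * β
              ≤ (2 * (c * ‖(inner ℂ (T u) u : ℂ)‖) + ‖T u‖ ^ 2) * β := by
            apply mul_le_mul_of_nonneg_right _ hβ
            linarith
          linarith
        linarith [h1.le, h6]
      -- operator norm bound
      have hKnn : 0 ≤ c ^ 2 + (t ^ 2 + N ^ 2) / β := by positivity
      have hAnorm : ‖A‖ ≤ Real.sqrt (c ^ 2 + (t ^ 2 + N ^ 2) / β) := by
        refine opNorm_le_bound _ (Real.sqrt_nonneg _) fun y => ?_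
        rcases eq_or_ne y 0 with rfl | hy0
        · simp
        · have hyn : 0 < ‖y‖ := norm_pos_iff.mpr hy0
          set u := (‖y‖ : ℝ)⁻¹ • y with hudef
          have hu : ‖u‖ = 1 := by
            rw [hudef, norm_smul, norm_inv, norm_norm, inv_mul_cancel₀ hyn.ne']
          have hyu : y = (‖y‖ : ℝ) • u := by
            rw [hudef, smul_smul, mul_inv_cancel₀ hyn.ne', one_smul]
          have hAyu : ‖A y‖ = ‖y‖ * ‖A u‖ := by
            nth_rewrite 1 [hyu]
            rw [map_smul_of_tower, norm_smul, norm_norm]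
          rw [hAyu]
          have h8 : ‖A u‖ ≤ Real.sqrt (c ^ 2 + (t ^ 2 + N ^ 2) / β) := by
            have := hunit u hu
            calc ‖A u‖ = Real.sqrt (‖A u‖ ^ 2) := by rw [Real.sqrt_sq (norm_nonneg _)]
            _ ≤ Real.sqrt (c ^ 2 + (t ^ 2 + N ^ 2) / β) := Real.sqrt_le_sqrt this
          rw [mul_comm]
          exact mul_le_mul_of_nonneg_right h8 hyn.le
      have hAnorm2 : β * ‖A‖ ^ 2 ≤ β * c ^ 2 + t ^ 2 + N ^ 2 := by
        have h9 : ‖A‖ ^ 2 ≤ c ^ 2 + (t ^ 2 + N ^ 2) / β := by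
          calc ‖A‖ ^ 2 ≤ (Real.sqrt (c ^ 2 + (t ^ 2 + N ^ 2) / β)) ^ 2 :=
            pow_le_pow_left₀ (norm_nonneg _) hAnorm 2
          _ = c ^ 2 + (t ^ 2 + N ^ 2) / β := Real.sq_sqrt hKnn
        have := mul_le_mul_of_nonneg_left h9 hβ
        rw [mul_add, mul_div_cancel₀ _ hβpos.ne'] at this
        linarith
      -- evaluate ‖(star A) x‖²
      have hstarAx : (star A) x = (c : ℂ) • x + (starRingEnd ℂ) z • (adjoint T) x := by
        rw [hAdef, star_add, star_smul, star_smul, star_one, star_eq_adjoint]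
        simp [Complex.conj_ofReal, RCLike.star_def]
      have hsAx : ‖(star A) x‖ ^ 2 = c ^ 2 + 2 * (c * a) + ‖(adjoint T) x‖ ^ 2 := by
        rw [hstarAx, @norm_add_sq ℂ]
        have h2 : (inner ℂ ((c : ℂ) • x) ((starRingEnd ℂ) z • (adjoint T) x) : ℂ)
            = (c : ℂ) * ((starRingEnd ℂ) z * (inner ℂ x ((adjoint T) x) : ℂ)) := by
          rw [inner_smul_left, inner_smul_right, Complex.conj_ofReal]
        have h2' : (inner ℂ x ((adjoint T) x) : ℂ) = w := by
          rw [adjoint_inner_right, hwdef]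
        rw [h2, h2', hzw]
        have h3 : ‖(c : ℂ) • x‖ = c := by
          rw [norm_smul, Complex.norm_real, Real.norm_eq_abs, abs_of_nonneg hc0, hx, mul_one]
        have h4 : ‖(starRingEnd ℂ) z • (adjoint T) x‖ = ‖(adjoint T) x‖ := by
          rw [norm_smul, RCLike.norm_conj, hz1, one_mul]
        rw [h3, h4]
        have h5 : RCLike.re ((c : ℂ) * (a : ℂ)) = c * a := by
          norm_cast
        rw [h5]
      -- conclude
      have h10 : ‖(star A) x‖ ^ 2 ≤ ‖A‖ ^ 2 := by
        have h11 : ‖(star A) x‖ ≤ ‖A‖ := by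
          calc ‖(star A) x‖ ≤ ‖star A‖ * ‖x‖ := le_opNorm _ _
          _ = ‖A‖ := by rw [norm_star, hx, mul_one]
        exact pow_le_pow_left₀ (norm_nonneg _) h11 2
      have h12 : β * ‖(star A) x‖ ^ 2 ≤ β * ‖A‖ ^ 2 :=
        mul_le_mul_of_nonneg_left h10 hβ
      rw [hsAx] at h12
      have hβca : β * (c * a) = α * a ^ 2 := by
        rw [← mul_assoc, hβc]; ring
      have h13 : β * (c ^ 2 + 2 * (c * a) + ‖(adjoint T) x‖ ^ 2)
          = β * c ^ 2 + 2 * (β * (c * a)) + β * ‖(adjoint T) x‖ ^ 2 := by ring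
      rw [h13] at h12
      linarith [h12, hAnorm2, ht2, hβca]
  calc Real.sqrt (α * a ^ 2 + β * ‖(adjoint T) x‖ ^ 2) ≤ Real.sqrt (N ^ 2) :=
        Real.sqrt_le_sqrt key
    _ = N := Real.sqrt_sq hN0

/-- The `(α,β)`-norm is preserved under the adjoint operation. -/
theorem abNorm_adjoint (T : H →L[ℂ] H) (α β : ℝ) (hα : 0 ≤ α) (hβ : 0 ≤ β)
    (hαβ : (α, β) ≠ (0, 0)) :
    abNorm α β (adjoint T) = abNorm α β T := by
  refine le_antisymm (abNorm_adjoint_le T α β hα hβ) ?_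
  have h := abNorm_adjoint_le (adjoint T) α β hα hβ
  rwa [adjoint_adjoint] at h
end

section
/- Let T ∈ B(H) and let α, β ≥ 0 with (α,β) ≠ (0,0). Then ‖T‖_{α,β}² ≥ max{ α·w(T)² + β·c(T*T), α·c(T)² + β·‖T‖², 2√(αβ)·w(T)·√(c(T*T)), 2√(αβ)·c(T)·‖T‖ }. -/
open ContinuousLinearMap

variable {H : Type*} [NormedAddCommGroup H] [InnerProductSpace ℂ H] [CompleteSpace H]

/-- The Crawford number `c(T) = inf {|⟨Tx,x⟩| : ‖x‖ = 1}`. -/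
noncomputable def crawford (T : H →L[ℂ] H) : ℝ :=
  sInf {r : ℝ | ∃ x : H, ‖x‖ = 1 ∧ r = ‖(inner ℂ (T x) x : ℂ)‖}

set_option maxHeartbeats 1000000 in
/-- Lower bounds for the `(α,β)`-norm in terms of `w(T)`, `c(T)`, `c(T*T)` and `‖T‖`. -/
theorem abNorm_sq_ge_max (T : H →L[ℂ] H) (α β : ℝ) (hα : 0 ≤ α) (hβ : 0 ≤ β)
    (hαβ : (α, β) ≠ (0, 0)) :
    abNorm α β T ^ 2 ≥
      max (max (α * numRad T ^ 2 + β * crawford (adjoint T * T))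
               (α * crawford T ^ 2 + β * ‖T‖ ^ 2))
          (max (2 * Real.sqrt (α * β) * numRad T * Real.sqrt (crawford (adjoint T * T)))
               (2 * Real.sqrt (α * β) * crawford T * ‖T‖)) := by
  have hTT : ∀ x : H, (‖(inner ℂ ((adjoint T * T) x) x : ℂ)‖) = ‖T x‖ ^ 2 := by
    intro x
    have h1 : (inner ℂ ((adjoint T * T) x) x : ℂ) = inner ℂ (T x) (T x) := by
      simp [ContinuousLinearMap.mul_apply, adjoint_inner_left]
    rw [h1, inner_self_eq_norm_sq_to_K]
    push_cast
    simp [norm_pow]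
  by_cases hH : ∃ x : H, ‖x‖ = 1
  · obtain ⟨x₀, hx₀⟩ := hH
    set N := abNorm α β T with hNdef
    set w := numRad T with hwdef
    set c := crawford T with hcdef
    set cT := crawford (adjoint T * T) with hcTdef
    -- numerical radius facts
    have hbddW : BddAbove {r : ℝ | ∃ x : H, ‖x‖ = 1 ∧ r = ‖(inner ℂ (T x) x : ℂ)‖} := by
      refine ⟨‖T‖, ?_⟩
      rintro r ⟨x, hx, rfl⟩
      calc ‖(inner ℂ (T x) x : ℂ)‖ ≤ ‖T x‖ * ‖x‖ := norm_inner_le_norm _ _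
        _ ≤ ‖T‖ * ‖x‖ * ‖x‖ := by gcongr; exact T.le_opNorm x
        _ = ‖T‖ := by rw [hx]; ring
    have hw_ub : ∀ x : H, ‖x‖ = 1 → ‖(inner ℂ (T x) x : ℂ)‖ ≤ w := fun x hx =>
      le_csSup hbddW ⟨x, hx, rfl⟩
    have hw_le : ∀ b : ℝ, (∀ x : H, ‖x‖ = 1 → ‖(inner ℂ (T x) x : ℂ)‖ ≤ b) → w ≤ b := by
      intro b hb
      exact csSup_le ⟨_, x₀, hx₀, rfl⟩ (by rintro r ⟨x, hx, rfl⟩; exact hb x hx)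
    have hw0 : 0 ≤ w := le_trans (norm_nonneg _) (hw_ub x₀ hx₀)
    -- Crawford facts for T
    have hc_lb : ∀ x : H, ‖x‖ = 1 → c ≤ ‖(inner ℂ (T x) x : ℂ)‖ := fun x hx =>
      csInf_le ⟨0, by rintro r ⟨y, hy, rfl⟩; exact norm_nonneg _⟩ ⟨x, hx, rfl⟩
    have hc0 : 0 ≤ c :=
      le_csInf ⟨_, x₀, hx₀, rfl⟩ (by rintro r ⟨x, hx, rfl⟩; exact norm_nonneg _)
    -- Crawford facts for adjoint T * T
    have hcT_lb : ∀ x : H, ‖x‖ = 1 → cT ≤ ‖T x‖ ^ 2 := by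
      intro x hx
      have := csInf_le (s := {r : ℝ | ∃ x : H, ‖x‖ = 1 ∧
          r = ‖(inner ℂ ((adjoint T * T) x) x : ℂ)‖})
        ⟨0, by rintro r ⟨y, hy, rfl⟩; exact norm_nonneg _⟩ ⟨x, hx, rfl⟩
      rwa [hTT x] at this
    have hcT0 : 0 ≤ cT :=
      le_csInf ⟨_, x₀, hx₀, rfl⟩ (by rintro r ⟨x, hx, rfl⟩; exact norm_nonneg _)
    -- abNorm facts
    have hbddN : BddAbove {r : ℝ | ∃ x : H, ‖x‖ = 1 ∧
        r = Real.sqrt (α * ‖(inner ℂ (T x) x : ℂ)‖ ^ 2 + β * ‖T x‖ ^ 2)} := by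
      refine ⟨Real.sqrt (α * ‖T‖ ^ 2 + β * ‖T‖ ^ 2), ?_⟩
      rintro r ⟨x, hx, rfl⟩
      have h1 : ‖(inner ℂ (T x) x : ℂ)‖ ≤ ‖T‖ := by
        calc ‖(inner ℂ (T x) x : ℂ)‖ ≤ ‖T x‖ * ‖x‖ := norm_inner_le_norm _ _
          _ ≤ ‖T‖ * ‖x‖ * ‖x‖ := by gcongr; exact T.le_opNorm x
          _ = ‖T‖ := by rw [hx]; ring
      have h2 : ‖T x‖ ≤ ‖T‖ := by simpa [hx] using T.le_opNorm x
      apply Real.sqrt_le_sqrt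
      have h3 := pow_le_pow_left₀ (norm_nonneg (inner ℂ (T x) x : ℂ)) h1 2
      have h4 := pow_le_pow_left₀ (norm_nonneg (T x)) h2 2
      nlinarith
    have hN_ub : ∀ x : H, ‖x‖ = 1 →
        Real.sqrt (α * ‖(inner ℂ (T x) x : ℂ)‖ ^ 2 + β * ‖T x‖ ^ 2) ≤ N := fun x hx =>
      le_csSup hbddN ⟨x, hx, rfl⟩
    have hN0 : 0 ≤ N := le_trans (Real.sqrt_nonneg _) (hN_ub x₀ hx₀)
    have hkey : ∀ x : H, ‖x‖ = 1 →
        α * ‖(inner ℂ (T x) x : ℂ)‖ ^ 2 + β * ‖T x‖ ^ 2 ≤ N ^ 2 := by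
      intro x hx
      have h := hN_ub x hx
      have hnn : 0 ≤ α * ‖(inner ℂ (T x) x : ℂ)‖ ^ 2 + β * ‖T x‖ ^ 2 := by positivity
      calc α * ‖(inner ℂ (T x) x : ℂ)‖ ^ 2 + β * ‖T x‖ ^ 2
          = Real.sqrt (α * ‖(inner ℂ (T x) x : ℂ)‖ ^ 2 + β * ‖T x‖ ^ 2) ^ 2 :=
            (Real.sq_sqrt hnn).symm
        _ ≤ N ^ 2 := by gcongr
    -- operator norm facts
    have hTn_ub : ∀ x : H, ‖x‖ = 1 → ‖T x‖ ≤ ‖T‖ := fun x hx => by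
      simpa [hx] using T.le_opNorm x
    have hTn_le : ∀ M : ℝ, 0 ≤ M → (∀ x : H, ‖x‖ = 1 → ‖T x‖ ≤ M) → ‖T‖ ≤ M := by
      intro M hM hb
      refine T.opNorm_le_bound hM fun x => ?_
      rcases eq_or_ne x 0 with rfl | hx
      · simp
      · have hu : ‖(‖x‖⁻¹ • x)‖ = 1 := norm_smul_inv_norm hx
        have h1 := hb _ hu
        rw [ContinuousLinearMap.map_smul_of_tower, norm_smul, norm_inv, norm_norm] at h1
        have hxpos : 0 < ‖x‖ := norm_pos_iff.mpr hx
        rw [inv_mul_le_iff₀ hxpos] at h1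
        linarith [h1]
    -- AM-GM
    have hamgm : ∀ a b : ℝ, 2 * Real.sqrt (α * β) * a * b ≤ α * a ^ 2 + β * b ^ 2 := by
      intro a b
      have h := two_mul_le_add_sq (Real.sqrt α * a) (Real.sqrt β * b)
      calc 2 * Real.sqrt (α * β) * a * b
          = 2 * (Real.sqrt α * a) * (Real.sqrt β * b) := by
            rw [Real.sqrt_mul hα]; ring
        _ ≤ (Real.sqrt α * a) ^ 2 + (Real.sqrt β * b) ^ 2 := h
        _ = α * a ^ 2 + β * b ^ 2 := by
            rw [mul_pow, mul_pow, Real.sq_sqrt hα, Real.sq_sqrt hβ]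
    rw [ge_iff_le]
    refine max_le (max_le ?_ ?_) (max_le ?_ ?_)
    · -- α w² + β cT ≤ N²
      rcases eq_or_lt_of_le hα with hα0 | hα'
      · have hx := hkey x₀ hx₀
        have h2 : β * cT ≤ β * ‖T x₀‖ ^ 2 :=
          mul_le_mul_of_nonneg_left (hcT_lb x₀ hx₀) hβ
        rw [← hα0, zero_mul, zero_add]
        nlinarith [mul_nonneg hα (sq_nonneg ‖(inner ℂ (T x₀) x₀ : ℂ)‖)]
      · have hM : 0 ≤ N ^ 2 - β * cT := by
          have hx := hkey x₀ hx₀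
          have h2 : β * cT ≤ β * ‖T x₀‖ ^ 2 :=
            mul_le_mul_of_nonneg_left (hcT_lb x₀ hx₀) hβ
          nlinarith [sq_nonneg ‖(inner ℂ (T x₀) x₀ : ℂ)‖]
        have hwle : w ≤ Real.sqrt ((N ^ 2 - β * cT) / α) := by
          apply hw_le
          intro x hx
          apply Real.le_sqrt_of_sq_le
          rw [le_div_iff₀ hα']
          have h1 := hkey x hx
          have h2 : β * cT ≤ β * ‖T x‖ ^ 2 :=
            mul_le_mul_of_nonneg_left (hcT_lb x hx) hβ
          nlinarith
        have hw2 : w ^ 2 ≤ (N ^ 2 - β * cT) / α := by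
          calc w ^ 2 ≤ Real.sqrt ((N ^ 2 - β * cT) / α) ^ 2 := by gcongr
            _ = (N ^ 2 - β * cT) / α := Real.sq_sqrt (by positivity)
        rw [le_div_iff₀ hα'] at hw2
        nlinarith [hw2]
    · -- α c² + β ‖T‖² ≤ N²
      rcases eq_or_lt_of_le hβ with hβ0 | hβ'
      · have hx := hkey x₀ hx₀
        have h2 : α * c ^ 2 ≤ α * ‖(inner ℂ (T x₀) x₀ : ℂ)‖ ^ 2 := by
          apply mul_le_mul_of_nonneg_left _ hα
          exact pow_le_pow_left₀ hc0 (hc_lb x₀ hx₀) 2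
        rw [← hβ0, zero_mul, add_zero]
        nlinarith [mul_nonneg hβ (sq_nonneg ‖T x₀‖)]
      · have hM : 0 ≤ N ^ 2 - α * c ^ 2 := by
          have hx := hkey x₀ hx₀
          have h2 : α * c ^ 2 ≤ α * ‖(inner ℂ (T x₀) x₀ : ℂ)‖ ^ 2 := by
            apply mul_le_mul_of_nonneg_left _ hα
            exact pow_le_pow_left₀ hc0 (hc_lb x₀ hx₀) 2
          nlinarith [sq_nonneg ‖T x₀‖]
        have hTle : ‖T‖ ≤ Real.sqrt ((N ^ 2 - α * c ^ 2) / β) := by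
          apply hTn_le _ (Real.sqrt_nonneg _)
          intro x hx
          apply Real.le_sqrt_of_sq_le
          rw [le_div_iff₀ hβ']
          have h1 := hkey x hx
          have h2 : α * c ^ 2 ≤ α * ‖(inner ℂ (T x) x : ℂ)‖ ^ 2 := by
            apply mul_le_mul_of_nonneg_left _ hα
            exact pow_le_pow_left₀ hc0 (hc_lb x hx) 2
          nlinarith
        have hT2 : ‖T‖ ^ 2 ≤ (N ^ 2 - α * c ^ 2) / β := by
          calc ‖T‖ ^ 2 ≤ Real.sqrt ((N ^ 2 - α * c ^ 2) / β) ^ 2 := by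
                gcongr
            _ = (N ^ 2 - α * c ^ 2) / β := Real.sq_sqrt (by positivity)
        rw [le_div_iff₀ hβ'] at hT2
        nlinarith [hT2]
    · -- 2√(αβ) w √cT ≤ N²
      have hstep : ∀ x : H, ‖x‖ = 1 →
          2 * Real.sqrt (α * β) * ‖(inner ℂ (T x) x : ℂ)‖ * Real.sqrt cT ≤ N ^ 2 := by
        intro x hx
        have hsc : Real.sqrt cT ≤ ‖T x‖ := by
          calc Real.sqrt cT ≤ Real.sqrt (‖T x‖ ^ 2) := Real.sqrt_le_sqrt (hcT_lb x hx)
            _ = ‖T x‖ := Real.sqrt_sq (norm_nonneg _)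
        calc 2 * Real.sqrt (α * β) * ‖(inner ℂ (T x) x : ℂ)‖ * Real.sqrt cT
            ≤ 2 * Real.sqrt (α * β) * ‖(inner ℂ (T x) x : ℂ)‖ * ‖T x‖ := by
              apply mul_le_mul_of_nonneg_left hsc (by positivity)
          _ ≤ α * ‖(inner ℂ (T x) x : ℂ)‖ ^ 2 + β * ‖T x‖ ^ 2 := hamgm _ _
          _ ≤ N ^ 2 := hkey x hx
      by_cases hk : Real.sqrt (α * β) * Real.sqrt cT = 0
      · have h0 : 2 * Real.sqrt (α * β) * w * Real.sqrt cT
            = 2 * w * (Real.sqrt (α * β) * Real.sqrt cT) := by ring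
        rw [h0, hk, mul_zero]
        exact sq_nonneg N
      · have hk' : 0 < Real.sqrt (α * β) * Real.sqrt cT :=
          lt_of_le_of_ne (by positivity) (Ne.symm hk)
        have hwle : w ≤ N ^ 2 / (2 * (Real.sqrt (α * β) * Real.sqrt cT)) := by
          apply hw_le
          intro x hx
          rw [le_div_iff₀ (by positivity)]
          calc ‖(inner ℂ (T x) x : ℂ)‖ * (2 * (Real.sqrt (α * β) * Real.sqrt cT))
              = 2 * Real.sqrt (α * β) * ‖(inner ℂ (T x) x : ℂ)‖ * Real.sqrt cT := by ring
            _ ≤ N ^ 2 := hstep x hx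
        rw [le_div_iff₀ (by positivity)] at hwle
        calc 2 * Real.sqrt (α * β) * w * Real.sqrt cT
            = w * (2 * (Real.sqrt (α * β) * Real.sqrt cT)) := by ring
          _ ≤ N ^ 2 := hwle
    · -- 2√(αβ) c ‖T‖ ≤ N²
      have hstep : ∀ x : H, ‖x‖ = 1 →
          2 * Real.sqrt (α * β) * c * ‖T x‖ ≤ N ^ 2 := by
        intro x hx
        calc 2 * Real.sqrt (α * β) * c * ‖T x‖
            ≤ 2 * Real.sqrt (α * β) * ‖(inner ℂ (T x) x : ℂ)‖ * ‖T x‖ := by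
              apply mul_le_mul_of_nonneg_right _ (norm_nonneg _)
              apply mul_le_mul_of_nonneg_left (hc_lb x hx) (by positivity)
          _ ≤ α * ‖(inner ℂ (T x) x : ℂ)‖ ^ 2 + β * ‖T x‖ ^ 2 := hamgm _ _
          _ ≤ N ^ 2 := hkey x hx
      by_cases hk : Real.sqrt (α * β) * c = 0
      · have h0 : 2 * Real.sqrt (α * β) * c * ‖T‖
            = 2 * ‖T‖ * (Real.sqrt (α * β) * c) := by ring
        rw [h0, hk, mul_zero]
        exact sq_nonneg N
      · have hk' : 0 < Real.sqrt (α * β) * c :=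
          lt_of_le_of_ne (by positivity) (Ne.symm hk)
        have hTle : ‖T‖ ≤ N ^ 2 / (2 * (Real.sqrt (α * β) * c)) := by
          apply hTn_le _ (by positivity)
          intro x hx
          rw [le_div_iff₀ (by positivity)]
          calc ‖T x‖ * (2 * (Real.sqrt (α * β) * c))
              = 2 * Real.sqrt (α * β) * c * ‖T x‖ := by ring
            _ ≤ N ^ 2 := hstep x hx
        rw [le_div_iff₀ (by positivity)] at hTle
        calc 2 * Real.sqrt (α * β) * c * ‖T‖
            = ‖T‖ * (2 * (Real.sqrt (α * β) * c)) := by ring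
          _ ≤ N ^ 2 := hTle
  · -- trivial space: no unit vectors
    have hT0 : T = 0 := by
      ext x
      by_contra hx
      have hx' : x ≠ 0 := fun h => hx (by simp [h])
      exact hH ⟨‖x‖⁻¹ • x, norm_smul_inv_norm hx'⟩
    have hempty : ∀ (S : H →L[ℂ] H),
        {r : ℝ | ∃ x : H, ‖x‖ = 1 ∧ r = ‖(inner ℂ (S x) x : ℂ)‖} = ∅ := by
      intro S
      ext r
      simp only [Set.mem_setOf_eq, Set.mem_empty_iff_false, iff_false, not_exists]
      exact fun x hx => absurd ⟨x, hx.1⟩ hH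
    have hempty2 : {r : ℝ | ∃ x : H, ‖x‖ = 1 ∧
        r = Real.sqrt (α * ‖(inner ℂ (T x) x : ℂ)‖ ^ 2 + β * ‖T x‖ ^ 2)} = ∅ := by
      ext r
      simp only [Set.mem_setOf_eq, Set.mem_empty_iff_false, iff_false, not_exists]
      exact fun x hx => absurd ⟨x, hx.1⟩ hH
    have h1 : numRad T = 0 := by rw [numRad, hempty, Real.sSup_empty]
    have h2 : crawford T = 0 := by rw [crawford, hempty, Real.sInf_empty]
    have h3 : crawford (adjoint T * T) = 0 := by rw [crawford, hempty, Real.sInf_empty]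
    have h4 : abNorm α β T = 0 := by rw [abNorm, hempty2, Real.sSup_empty]
    rw [h1, h2, h3, h4, hT0]
    simp
end

section
/- Let A, B ∈ B(H) with AB = BA, where A is an isometry, and let α, β ≥ 0 with (α,β) ≠ (0,0). Then ‖AB‖_{α,β} ≤ √( α/(α+β) + 1 ) · ‖B‖_{α,β}. -/
open ContinuousLinearMap

variable {H : Type*} [NormedAddCommGroup H] [InnerProductSpace ℂ H] [CompleteSpace H]

lemma exp_sum_extract (M : ℕ) (hM : 0 < M) (m : ℤ) :
    ∑ r ∈ Finset.range M, Complex.exp (2 * Real.pi * Complex.I * ((r : ℤ) * m) / M) =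
      if (M : ℤ) ∣ m then (M : ℂ) else 0 := by
  have hMC : (M : ℂ) ≠ 0 := by exact_mod_cast hM.ne'
  have hπ : (2 : ℂ) * Real.pi * Complex.I ≠ 0 := by
    simp [Real.pi_ne_zero, Complex.I_ne_zero]
  set ζ : ℂ := Complex.exp (2 * Real.pi * Complex.I * m / M) with hζ
  have hterm : ∀ r : ℕ, Complex.exp (2 * Real.pi * Complex.I * ((r : ℤ) * m) / M) = ζ ^ r := by
    intro r
    rw [hζ, ← Complex.exp_nat_mul]
    congr 1
    push_cast
    ring
  simp only [hterm]
  have hζ1 : ζ = 1 ↔ (M : ℤ) ∣ m := by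
    rw [hζ, Complex.exp_eq_one_iff]
    constructor
    · rintro ⟨n, hn⟩
      refine ⟨n, ?_⟩
      have h2 : (m : ℂ) = M * n := by
        have hn' : (2 * Real.pi * Complex.I) * (m : ℂ) = (2 * Real.pi * Complex.I) * (M * n) := by
          field_simp at hn
          linear_combination (2 * Real.pi * Complex.I) * hn
        exact mul_left_cancel₀ hπ hn'
      exact_mod_cast h2
    · rintro ⟨n, hn⟩
      refine ⟨n, ?_⟩
      rw [hn]
      push_cast
      field_simp
  by_cases h : (M : ℤ) ∣ m
  · simp [hζ1.mpr h, h]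
  · rw [if_neg h]
    have hζne : ζ ≠ 1 := fun hc => h (hζ1.mp hc)
    rw [geom_sum_eq hζne M]
    have hζM : ζ ^ M = 1 := by
      rw [hζ, ← Complex.exp_nat_mul]
      have : (M : ℂ) * (2 * Real.pi * Complex.I * m / M) = (m : ℤ) * (2 * Real.pi * Complex.I) := by
        field_simp
      rw [this, Complex.exp_int_mul_two_pi_mul_I]
    rw [hζM]
    simp

lemma bouldin (A B : H →L[ℂ] H) (hAB : A * B = B * A) (hA : ∀ x : H, ‖A x‖ = ‖x‖)
    (K : ℝ) (hK : ∀ z : H, ‖(inner ℂ (B z) z : ℂ)‖ ≤ K * ‖z‖ ^ 2) (x : H) :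
    ‖(inner ℂ (A (B x)) x : ℂ)‖ ≤ K * ‖x‖ ^ 2 := by
  have hf : ∀ u v : H, (inner ℂ (A u) (A v) : ℂ) = inner ℂ u v := by
    intro u v
    exact LinearIsometry.inner_map_map ⟨A.toLinearMap, hA⟩ u v
  have hisoPow : ∀ (k : ℕ) (u v : H), (inner ℂ ((A ^ k) u) ((A ^ k) v) : ℂ) = inner ℂ u v := by
    intro k
    induction k with
    | zero => intro u v; simp
    | succ k ih =>
        intro u v
        rw [pow_succ]
        simp only [ContinuousLinearMap.mul_apply]
        rw [ih, hf]
  have hBpow : ∀ (k : ℕ) (u : H), B ((A ^ k) u) = (A ^ k) (B u) := by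
    intro k u
    have h : B * A ^ k = A ^ k * B := by
      induction k with
      | zero => simp
      | succ k ih => rw [pow_succ, ← mul_assoc, ih, mul_assoc, ← hAB, ← mul_assoc]
    calc B ((A ^ k) u) = (B * A ^ k) u := rfl
    _ = (A ^ k * B) u := by rw [h]
    _ = (A ^ k) (B u) := rfl
  set D : ℂ := (inner ℂ (A (B x)) x : ℂ) with hD
  have key : ∀ n : ℕ, (n : ℝ) * ‖D‖ ≤ K * (n + 1) * ‖x‖ ^ 2 := by
    intro n
    set N : ℕ := n + 1 with hN
    set M : ℕ := n + 2 with hM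
    have hMpos : 0 < M := by omega
    have hMC : (M : ℂ) ≠ 0 := by exact_mod_cast hMpos.ne'
    set c : ℤ → ℂ := fun j => Complex.exp (2 * Real.pi * Complex.I * j / M) with hc
    have hc_add : ∀ j1 j2 : ℤ, c (j1 + j2) = c j1 * c j2 := by
      intro j1 j2
      simp only [hc, ← Complex.exp_add]
      congr 1
      push_cast
      field_simp
    have hc_conj : ∀ j : ℤ, (starRingEnd ℂ) (c j) = c (-j) := by
      intro j
      simp only [hc, ← Complex.exp_conj]
      congr 1
      simp only [map_div₀, map_mul, Complex.conj_I, Complex.conj_ofReal, map_intCast,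
        map_natCast, map_ofNat]
      push_cast
      ring
    have hc_norm : ∀ j : ℤ, ‖c j‖ = 1 := by
      intro j
      simp only [hc]
      have harg : 2 * Real.pi * Complex.I * (j : ℂ) / M
          = ((2 * Real.pi * j / M : ℝ) : ℂ) * Complex.I := by
        push_cast
        ring
      rw [harg]
      exact Complex.norm_exp_ofReal_mul_I _
    have hc_sum : ∀ m : ℤ, ∑ r ∈ Finset.range M, c ((r : ℤ) * m)
        = if (M : ℤ) ∣ m then (M : ℂ) else 0 := by
      intro m
      rw [← exp_sum_extract M hMpos m]
      refine Finset.sum_congr rfl fun r _ => ?_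
      simp only [hc]
      congr 1
      push_cast
      ring
    set z : ℕ → H := fun r => ∑ k ∈ Finset.range N, c ((r : ℤ) * k) • ((A ^ k) x) with hz
    have hzr : ∀ r : ℕ, z r = ∑ k ∈ Finset.range N, c ((r : ℤ) * k) • ((A ^ k) x) := by
      intro r; rw [hz]
    have hexpand : ∀ (r : ℕ) (w : H),
        (inner ℂ (∑ k ∈ Finset.range N, c ((r : ℤ) * k) • ((A ^ k) w)) (z r) : ℂ)
        = ∑ k ∈ Finset.range N, ∑ l ∈ Finset.range N,
            (c (-((r : ℤ) * k)) * c ((r : ℤ) * l)) * (inner ℂ ((A ^ k) w) ((A ^ l) x) : ℂ) := by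
      intro r w
      rw [hzr]
      simp only [sum_inner, inner_sum, inner_smul_left, inner_smul_right, hc_conj,
        Finset.mul_sum]
      rw [Finset.sum_comm]
      refine Finset.sum_congr rfl fun k _ => Finset.sum_congr rfl fun l _ => by ring
    have hBz : ∀ r : ℕ, B (z r) = ∑ k ∈ Finset.range N, c ((r : ℤ) * k) • ((A ^ k) (B x)) := by
      intro r
      rw [hzr, map_sum]
      exact Finset.sum_congr rfl fun k _ => by rw [map_smul, hBpow]
    have swap3 : ∀ t : ℕ → ℕ → ℕ → ℂ,
        ∑ r ∈ Finset.range M, ∑ k ∈ Finset.range N, ∑ l ∈ Finset.range N, t r k l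
        = ∑ k ∈ Finset.range N, ∑ l ∈ Finset.range N, ∑ r ∈ Finset.range M, t r k l := by
      intro t
      rw [Finset.sum_comm]
      exact Finset.sum_congr rfl fun k _ => Finset.sum_comm
    -- the key sum
    have hS1 : ∑ r ∈ Finset.range M, c r * (inner ℂ (B (z r)) (z r) : ℂ)
        = (n : ℂ) * ((M : ℂ) * D) := by
      have step1 : ∀ r : ℕ, c r * (inner ℂ (B (z r)) (z r) : ℂ)
          = ∑ k ∈ Finset.range N, ∑ l ∈ Finset.range N,
              c ((r : ℤ) * ((l : ℤ) + 1 - k)) * (inner ℂ ((A ^ k) (B x)) ((A ^ l) x) : ℂ) := by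
        intro r
        rw [hBz r, hexpand r (B x), Finset.mul_sum]
        refine Finset.sum_congr rfl fun k _ => ?_
        rw [Finset.mul_sum]
        refine Finset.sum_congr rfl fun l _ => ?_
        have hcoef : c r * (c (-((r : ℤ) * k)) * c ((r : ℤ) * l))
            = c ((r : ℤ) * ((l : ℤ) + 1 - k)) := by
          rw [← hc_add, ← hc_add]
          congr 1
          push_cast
          ring
        calc c (r : ℤ) * ((c (-((r : ℤ) * k)) * c ((r : ℤ) * l))
                * (inner ℂ ((A ^ k) (B x)) ((A ^ l) x) : ℂ))
            = (c (r : ℤ) * (c (-((r : ℤ) * k)) * c ((r : ℤ) * l)))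
                * (inner ℂ ((A ^ k) (B x)) ((A ^ l) x) : ℂ) := by ring
        _ = c ((r : ℤ) * ((l : ℤ) + 1 - k)) * (inner ℂ ((A ^ k) (B x)) ((A ^ l) x) : ℂ) := by
            rw [hcoef]
      have step2 : ∀ k ∈ Finset.range N, ∀ l ∈ Finset.range N,
          ∑ r ∈ Finset.range M,
            c ((r : ℤ) * ((l : ℤ) + 1 - k)) * (inner ℂ ((A ^ k) (B x)) ((A ^ l) x) : ℂ)
          = if l + 1 = k then (M : ℂ) * (inner ℂ ((A ^ k) (B x)) ((A ^ l) x) : ℂ) else 0 := by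
        intro k hk l hl
        rw [← Finset.sum_mul, hc_sum]
        simp only [Finset.mem_range] at hk hl
        have hdvd : ((M : ℤ) ∣ ((l : ℤ) + 1 - k)) ↔ (l + 1 = k) := by
          constructor
          · intro hd
            have h0 : ((l : ℤ) + 1 - k) = 0 := by
              refine Int.eq_zero_of_abs_lt_dvd hd ?_
              rw [abs_lt]
              constructor <;> omega
            omega
          · intro he
            have h0 : ((l : ℤ) + 1 - k) = 0 := by omega
            simp [h0]
        by_cases hcase : l + 1 = k
        · rw [if_pos (hdvd.mpr hcase), if_pos hcase]
        · rw [if_neg (fun hd => hcase (hdvd.mp hd)), if_neg hcase, zero_mul]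
      have hdiag : ∀ l : ℕ, (inner ℂ ((A ^ (l + 1)) (B x)) ((A ^ l) x) : ℂ) = D := by
        intro l
        rw [pow_succ]
        simp only [ContinuousLinearMap.mul_apply]
        rw [hisoPow, hD]
      calc ∑ r ∈ Finset.range M, c r * (inner ℂ (B (z r)) (z r) : ℂ)
          = ∑ r ∈ Finset.range M, ∑ k ∈ Finset.range N, ∑ l ∈ Finset.range N,
              c ((r : ℤ) * ((l : ℤ) + 1 - k)) * (inner ℂ ((A ^ k) (B x)) ((A ^ l) x) : ℂ) :=
            Finset.sum_congr rfl fun r _ => step1 r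
      _ = ∑ k ∈ Finset.range N, ∑ l ∈ Finset.range N, ∑ r ∈ Finset.range M,
              c ((r : ℤ) * ((l : ℤ) + 1 - k)) * (inner ℂ ((A ^ k) (B x)) ((A ^ l) x) : ℂ) :=
            swap3 _
      _ = ∑ k ∈ Finset.range N, ∑ l ∈ Finset.range N,
            (if l + 1 = k then (M : ℂ) * (inner ℂ ((A ^ k) (B x)) ((A ^ l) x) : ℂ) else 0) :=
            Finset.sum_congr rfl fun k hk => Finset.sum_congr rfl fun l hl => step2 k hk l hl
      _ = ∑ l ∈ Finset.range N, ∑ k ∈ Finset.range N,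
            (if l + 1 = k then (M : ℂ) * (inner ℂ ((A ^ k) (B x)) ((A ^ l) x) : ℂ) else 0) :=
            Finset.sum_comm
      _ = ∑ l ∈ Finset.range N,
            (if l + 1 ∈ Finset.range N
              then (M : ℂ) * (inner ℂ ((A ^ (l + 1)) (B x)) ((A ^ l) x) : ℂ) else 0) :=
            Finset.sum_congr rfl fun l _ =>
              Finset.sum_ite_eq (Finset.range N) (l + 1)
                (fun k => (M : ℂ) * (inner ℂ ((A ^ k) (B x)) ((A ^ l) x) : ℂ))
      _ = ∑ l ∈ Finset.range N, (if l + 1 ∈ Finset.range N then (M : ℂ) * D else 0) := by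
            refine Finset.sum_congr rfl fun l _ => ?_
            rw [hdiag l]
      _ = (n : ℂ) * ((M : ℂ) * D) := by
            simp only [Finset.mem_range, hN]
            rw [Finset.sum_range_succ, if_neg (by omega), add_zero]
            rw [Finset.sum_congr rfl fun l hl =>
              if_pos (by simp only [Finset.mem_range] at hl; omega)]
            simp [Finset.sum_const]
    -- the norm sum
    have hS2 : ∑ r ∈ Finset.range M, ‖z r‖ ^ 2 = (M : ℝ) * N * ‖x‖ ^ 2 := by
      have step1 : ∀ r : ℕ, (inner ℂ (z r) (z r) : ℂ)
          = ∑ k ∈ Finset.range N, ∑ l ∈ Finset.range N,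
              c ((r : ℤ) * ((l : ℤ) - k)) * (inner ℂ ((A ^ k) x) ((A ^ l) x) : ℂ) := by
        intro r
        nth_rewrite 1 [hzr r]
        rw [hexpand r x]
        refine Finset.sum_congr rfl fun k _ => Finset.sum_congr rfl fun l _ => ?_
        have hcoef : c (-((r : ℤ) * k)) * c ((r : ℤ) * l) = c ((r : ℤ) * ((l : ℤ) - k)) := by
          rw [← hc_add]
          congr 1
          push_cast
          ring
        rw [hcoef]
      have step2 : ∀ k ∈ Finset.range N, ∀ l ∈ Finset.range N,
          ∑ r ∈ Finset.range M,
            c ((r : ℤ) * ((l : ℤ) - k)) * (inner ℂ ((A ^ k) x) ((A ^ l) x) : ℂ)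
          = if k = l then (M : ℂ) * (inner ℂ ((A ^ k) x) ((A ^ l) x) : ℂ) else 0 := by
        intro k hk l hl
        rw [← Finset.sum_mul, hc_sum]
        simp only [Finset.mem_range] at hk hl
        have hdvd : ((M : ℤ) ∣ ((l : ℤ) - k)) ↔ (k = l) := by
          constructor
          · intro hd
            have h0 : ((l : ℤ) - k) = 0 := by
              refine Int.eq_zero_of_abs_lt_dvd hd ?_
              rw [abs_lt]
              constructor <;> omega
            omega
          · intro he
            have h0 : ((l : ℤ) - k) = 0 := by omega
            simp [h0]
        by_cases hcase : k = l
        · rw [if_pos (hdvd.mpr hcase), if_pos hcase]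
        · rw [if_neg (fun hd => hcase (hdvd.mp hd)), if_neg hcase, zero_mul]
      have hdiag : ∀ k : ℕ, (inner ℂ ((A ^ k) x) ((A ^ k) x) : ℂ) = ((‖x‖ : ℂ)) ^ 2 := by
        intro k
        rw [hisoPow, inner_self_eq_norm_sq_to_K]
        norm_cast
      have hcomplex : ∑ r ∈ Finset.range M, ((‖z r‖ : ℂ)) ^ 2
          = (M : ℂ) * N * ((‖x‖ : ℂ)) ^ 2 := by
        calc ∑ r ∈ Finset.range M, ((‖z r‖ : ℂ)) ^ 2
            = ∑ r ∈ Finset.range M, (inner ℂ (z r) (z r) : ℂ) := by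
              refine Finset.sum_congr rfl fun r _ => ?_
              rw [inner_self_eq_norm_sq_to_K]
              norm_cast
        _ = ∑ r ∈ Finset.range M, ∑ k ∈ Finset.range N, ∑ l ∈ Finset.range N,
              c ((r : ℤ) * ((l : ℤ) - k)) * (inner ℂ ((A ^ k) x) ((A ^ l) x) : ℂ) :=
              Finset.sum_congr rfl fun r _ => step1 r
        _ = ∑ k ∈ Finset.range N, ∑ l ∈ Finset.range N, ∑ r ∈ Finset.range M,
              c ((r : ℤ) * ((l : ℤ) - k)) * (inner ℂ ((A ^ k) x) ((A ^ l) x) : ℂ) := swap3 _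
        _ = ∑ k ∈ Finset.range N, ∑ l ∈ Finset.range N,
              (if k = l then (M : ℂ) * (inner ℂ ((A ^ k) x) ((A ^ l) x) : ℂ) else 0) :=
              Finset.sum_congr rfl fun k hk => Finset.sum_congr rfl fun l hl => step2 k hk l hl
        _ = ∑ k ∈ Finset.range N,
              (if k ∈ Finset.range N then (M : ℂ) * (inner ℂ ((A ^ k) x) ((A ^ k) x) : ℂ) else 0) :=
              Finset.sum_congr rfl fun k _ =>
                Finset.sum_ite_eq (Finset.range N) k
                  (fun l => (M : ℂ) * (inner ℂ ((A ^ k) x) ((A ^ l) x) : ℂ))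
        _ = ∑ k ∈ Finset.range N, (M : ℂ) * ((‖x‖ : ℂ)) ^ 2 := by
              refine Finset.sum_congr rfl fun k hk => ?_
              rw [if_pos hk, hdiag k]
        _ = (M : ℂ) * N * ((‖x‖ : ℂ)) ^ 2 := by
              rw [Finset.sum_const, Finset.card_range]
              simp
              ring
      have := hcomplex
      push_cast at this ⊢
      exact_mod_cast this
    -- assemble
    have hbound : (n : ℝ) * M * ‖D‖ ≤ K * ((M : ℝ) * N * ‖x‖ ^ 2) := by
      have h1 : ‖∑ r ∈ Finset.range M, c r * (inner ℂ (B (z r)) (z r) : ℂ)‖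
          = (n : ℝ) * M * ‖D‖ := by
        rw [hS1]
        simp [norm_mul]
        ring
      have h2 : ‖∑ r ∈ Finset.range M, c r * (inner ℂ (B (z r)) (z r) : ℂ)‖
          ≤ ∑ r ∈ Finset.range M, K * ‖z r‖ ^ 2 := by
        refine (norm_sum_le _ _).trans ?_
        refine Finset.sum_le_sum fun r _ => ?_
        rw [norm_mul, hc_norm, one_mul]
        exact hK (z r)
      rw [h1] at h2
      rw [← Finset.mul_sum, hS2] at h2
      exact h2
    have hMR : (0 : ℝ) < (M : ℝ) := by exact_mod_cast hMpos
    refine le_of_mul_le_mul_left ?_ hMR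
    calc (M : ℝ) * ((n : ℝ) * ‖D‖) = (n : ℝ) * M * ‖D‖ := by ring
    _ ≤ K * ((M : ℝ) * N * ‖x‖ ^ 2) := hbound
    _ = (M : ℝ) * (K * ((n : ℝ) + 1) * ‖x‖ ^ 2) := by
        have : (N : ℝ) = (n : ℝ) + 1 := by rw [hN]; push_cast; ring
        rw [this]; ring
  -- pass to the limit
  by_contra hlt
  push_neg at hlt
  set ε : ℝ := ‖D‖ - K * ‖x‖ ^ 2 with hε
  have hεpos : 0 < ε := by rw [hε]; linarith
  obtain ⟨n, hn⟩ := exists_nat_gt ((K * ‖x‖ ^ 2) / ε)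
  have h1 := key n
  have h2 : (K * ‖x‖ ^ 2) < (n : ℝ) * ε := by
    rwa [div_lt_iff₀ hεpos] at hn
  rw [hε] at h2
  nlinarith

/-- Bound for the `(α,β)`-norm of `AB` when `A` is an isometry commuting with `B`. -/
theorem abNorm_mul_le_of_comm_isometry (A B : H →L[ℂ] H) (hAB : A * B = B * A)
    (hA : ∀ x : H, ‖A x‖ = ‖x‖) (α β : ℝ) (hα : 0 ≤ α) (hβ : 0 ≤ β)
    (hαβ : (α, β) ≠ (0, 0)) :
    abNorm α β (A * B) ≤ Real.sqrt (α / (α + β) + 1) * abNorm α β B := by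
  have hne : ¬(α = 0 ∧ β = 0) := by
    intro ⟨h1, h2⟩
    exact hαβ (by rw [h1, h2])
  have hsum : 0 < α + β := by
    rcases hα.lt_or_eq with h | h
    · linarith
    · rcases hβ.lt_or_eq with h' | h'
      · linarith
      · exact absurd ⟨h.symm, h'.symm⟩ hne
  set S : ℝ := abNorm α β B with hS
  set sB : Set ℝ := {r : ℝ | ∃ x : H, ‖x‖ = 1 ∧
    r = Real.sqrt (α * ‖(inner ℂ (B x) x : ℂ)‖ ^ 2 + β * ‖B x‖ ^ 2)} with hsB
  have hSdef : S = sSup sB := rfl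
  have hbdd : BddAbove sB := by
    refine ⟨Real.sqrt (α * ‖B‖ ^ 2 + β * ‖B‖ ^ 2), ?_⟩
    rintro r ⟨y, hy, rfl⟩
    apply Real.sqrt_le_sqrt
    have h1 : ‖(inner ℂ (B y) y : ℂ)‖ ≤ ‖B‖ := by
      calc ‖(inner ℂ (B y) y : ℂ)‖ ≤ ‖B y‖ * ‖y‖ := norm_inner_le_norm _ _
      _ = ‖B y‖ := by rw [hy, mul_one]
      _ ≤ ‖B‖ * ‖y‖ := B.le_opNorm y
      _ = ‖B‖ := by rw [hy, mul_one]
    have h2 : ‖B y‖ ≤ ‖B‖ := by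
      calc ‖B y‖ ≤ ‖B‖ * ‖y‖ := B.le_opNorm y
      _ = ‖B‖ := by rw [hy, mul_one]
    have h3 : 0 ≤ ‖(inner ℂ (B y) y : ℂ)‖ := norm_nonneg _
    have h4 : 0 ≤ ‖B y‖ := norm_nonneg _
    have h5 : ‖(inner ℂ (B y) y : ℂ)‖ ^ 2 ≤ ‖B‖ ^ 2 := pow_le_pow_left₀ h3 h1 2
    have h6 : ‖B y‖ ^ 2 ≤ ‖B‖ ^ 2 := pow_le_pow_left₀ h4 h2 2
    have h7 := mul_le_mul_of_nonneg_left h5 hα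
    have h8 := mul_le_mul_of_nonneg_left h6 hβ
    linarith
  have hS0 : 0 ≤ S := by
    rw [hSdef]
    exact Real.sSup_nonneg fun r ⟨y, hy, hr⟩ => hr ▸ Real.sqrt_nonneg _
  have hmem : ∀ y : H, ‖y‖ = 1 →
      α * ‖(inner ℂ (B y) y : ℂ)‖ ^ 2 + β * ‖B y‖ ^ 2 ≤ S ^ 2 := by
    intro y hy
    have hel : Real.sqrt (α * ‖(inner ℂ (B y) y : ℂ)‖ ^ 2 + β * ‖B y‖ ^ 2) ≤ S :=
      le_csSup hbdd ⟨y, hy, rfl⟩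
    have hnn : 0 ≤ α * ‖(inner ℂ (B y) y : ℂ)‖ ^ 2 + β * ‖B y‖ ^ 2 := by positivity
    calc α * ‖(inner ℂ (B y) y : ℂ)‖ ^ 2 + β * ‖B y‖ ^ 2
        = Real.sqrt (α * ‖(inner ℂ (B y) y : ℂ)‖ ^ 2 + β * ‖B y‖ ^ 2) ^ 2 :=
          (Real.sq_sqrt hnn).symm
    _ ≤ S ^ 2 := by
        have := Real.sqrt_nonneg (α * ‖(inner ℂ (B y) y : ℂ)‖ ^ 2 + β * ‖B y‖ ^ 2)
        nlinarith
  -- numerical radius bound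
  set K : ℝ := S / Real.sqrt (α + β) with hKdef
  have hK0 : 0 ≤ K := div_nonneg hS0 (Real.sqrt_nonneg _)
  have hKsq : K ^ 2 = S ^ 2 / (α + β) := by
    rw [hKdef, div_pow, Real.sq_sqrt hsum.le]
  have hKbound : ∀ z : H, ‖(inner ℂ (B z) z : ℂ)‖ ≤ K * ‖z‖ ^ 2 := by
    have hunit : ∀ y : H, ‖y‖ = 1 → ‖(inner ℂ (B y) y : ℂ)‖ ≤ K := by
      intro y hy
      have h1 : ‖(inner ℂ (B y) y : ℂ)‖ ≤ ‖B y‖ := by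
        calc ‖(inner ℂ (B y) y : ℂ)‖ ≤ ‖B y‖ * ‖y‖ := norm_inner_le_norm _ _
        _ = ‖B y‖ := by rw [hy, mul_one]
      have h2 : (α + β) * ‖(inner ℂ (B y) y : ℂ)‖ ^ 2 ≤ S ^ 2 := by
        have h3 := hmem y hy
        have h4 : 0 ≤ ‖(inner ℂ (B y) y : ℂ)‖ := norm_nonneg _
        have h5 : β * ‖(inner ℂ (B y) y : ℂ)‖ ^ 2 ≤ β * ‖B y‖ ^ 2 :=
          mul_le_mul_of_nonneg_left (pow_le_pow_left₀ h4 h1 2) hβ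
        linarith
      have h5 : ‖(inner ℂ (B y) y : ℂ)‖ ^ 2 ≤ K ^ 2 := by
        rw [hKsq, le_div_iff₀ hsum]
        linarith [h2]
      have h6 := norm_nonneg ((inner ℂ (B y) y : ℂ))
      nlinarith
    intro z
    rcases eq_or_ne z 0 with rfl | hz
    · simp
    · have hzn : 0 < ‖z‖ := norm_pos_iff.mpr hz
      set y : H := ((‖z‖ : ℂ))⁻¹ • z with hy
      have hyn : ‖y‖ = 1 := by
        rw [hy, norm_smul, norm_inv, Complex.norm_real, norm_norm, inv_mul_cancel₀ hzn.ne']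
      have hinner : (inner ℂ (B y) y : ℂ) = (((‖z‖ : ℂ)) ^ 2)⁻¹ * (inner ℂ (B z) z : ℂ) := by
        rw [hy, map_smul, inner_smul_left, inner_smul_right]
        have : ((starRingEnd ℂ) ((‖z‖ : ℂ))⁻¹) = ((‖z‖ : ℂ))⁻¹ := by
          rw [map_inv₀, Complex.conj_ofReal]
        push_cast
        rw [this]
        ring
      have := hunit y hyn
      rw [hinner] at this
      rw [norm_mul, norm_inv] at this
      have hzc : ‖((‖z‖ : ℂ)) ^ 2‖ = ‖z‖ ^ 2 := by
        rw [norm_pow, Complex.norm_real, norm_norm]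
      rw [hzc] at this
      calc ‖(inner ℂ (B z) z : ℂ)‖ = ‖z‖ ^ 2 * ((‖z‖ ^ 2)⁻¹ * ‖(inner ℂ (B z) z : ℂ)‖) := by
            field_simp
      _ ≤ ‖z‖ ^ 2 * K := by
            apply mul_le_mul_of_nonneg_left this (by positivity)
      _ = K * ‖z‖ ^ 2 := by ring
  -- main estimate for each unit vector
  refine Real.sSup_le ?_ (by positivity)
  rintro r ⟨y, hy, rfl⟩
  have hABy : (A * B) y = A (B y) := rfl
  have hnormAB : ‖(A * B) y‖ = ‖B y‖ := by rw [hABy, hA]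
  have hd : ‖(inner ℂ ((A * B) y) y : ℂ)‖ ≤ K := by
    have := bouldin A B hAB hA K hKbound y
    rw [hABy]
    rw [hy] at this
    simpa using this
  have hd2 : α * ‖(inner ℂ ((A * B) y) y : ℂ)‖ ^ 2 ≤ α * (S ^ 2 / (α + β)) := by
    rw [← hKsq]
    have h6 := norm_nonneg ((inner ℂ ((A * B) y) y : ℂ))
    exact mul_le_mul_of_nonneg_left (pow_le_pow_left₀ h6 hd 2) hα
  have hb2 : β * ‖(A * B) y‖ ^ 2 ≤ S ^ 2 := by
    rw [hnormAB]
    have := hmem y hy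
    have h7 : 0 ≤ α * ‖(inner ℂ (B y) y : ℂ)‖ ^ 2 := by positivity
    linarith
  have hsumle : α * ‖(inner ℂ ((A * B) y) y : ℂ)‖ ^ 2 + β * ‖(A * B) y‖ ^ 2
      ≤ (α / (α + β) + 1) * S ^ 2 := by
    have : α * (S ^ 2 / (α + β)) = (α / (α + β)) * S ^ 2 := by ring
    rw [this] at hd2
    linarith
  calc Real.sqrt (α * ‖(inner ℂ ((A * B) y) y : ℂ)‖ ^ 2 + β * ‖(A * B) y‖ ^ 2)
      ≤ Real.sqrt ((α / (α + β) + 1) * S ^ 2) := Real.sqrt_le_sqrt hsumle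
  _ = Real.sqrt (α / (α + β) + 1) * S := by
      rw [Real.sqrt_mul (by positivity), Real.sqrt_sq hS0]
end

section
/- Let T ∈ B(H) and set A = (1/2)(|T| + |T*|), B = |T|, C = |T| − |T*|. If there exists a unit vector x ∈ H with ‖Ax‖ = ‖A‖, ‖Bx‖ = ‖B‖ and Cx = 0, then for all real α, β ≥ 0 with (α,β) ≠ (0,0), (1/(α+β)) · ‖ (α/4)(|T| + |T*|)² + β·|T|² ‖ = (1/4)·‖ |T| + |T*| ‖² = ‖T‖². -/
open ContinuousLinearMap

variable {H : Type*} [NormedAddCommGroup H] [InnerProductSpace ℂ H] [CompleteSpace H]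

/-- `|T|`, the positive square root of `T*T`. -/
noncomputable def absOp (T : H →L[ℂ] H) : H →L[ℂ] H := CFC.sqrt (adjoint T * T)

set_option synthInstance.maxHeartbeats 1000000
set_option maxHeartbeats 1000000

lemma absOp_nonneg (T : H →L[ℂ] H) : (0:H→L[ℂ]H) ≤ absOp T := CFC.sqrt_nonneg _

lemma absOp_sq (T : H →L[ℂ] H) : absOp T ^ 2 = adjoint T * T := by
  refine CFC.sq_sqrt _ ?_
  simpa [star_eq_adjoint] using star_mul_self_nonneg T

lemma absOp_isSelfAdjoint (T : H →L[ℂ] H) : IsSelfAdjoint (absOp T) :=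
  IsSelfAdjoint.of_nonneg (absOp_nonneg T)

lemma inner_selfAdj_sq (A : H →L[ℂ] H) (hA : IsSelfAdjoint A) (x : H) :
    (inner ℂ ((A * A) x) x : ℂ) = inner ℂ (A x) (A x) := by
  have h := adjoint_inner_left A (x := x) (y := A x)
  rw [hA.adjoint_eq] at h
  simpa [mul_apply] using h

lemma norm_absOp_apply (T : H →L[ℂ] H) (x : H) : ‖absOp T x‖ = ‖T x‖ := by
  have h1 : (inner ℂ (absOp T x) (absOp T x) : ℂ) = inner ℂ (T x) (T x) := by
    rw [← inner_selfAdj_sq _ (absOp_isSelfAdjoint T), ← pow_two, absOp_sq,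
      ContinuousLinearMap.mul_apply, adjoint_inner_left]
  rw [inner_self_eq_norm_sq_to_K, inner_self_eq_norm_sq_to_K] at h1
  have h2 : ‖absOp T x‖ ^ 2 = ‖T x‖ ^ 2 := by exact_mod_cast h1
  nlinarith [norm_nonneg (absOp T x), norm_nonneg (T x)]

lemma norm_absOp (T : H →L[ℂ] H) : ‖absOp T‖ = ‖T‖ := by
  apply le_antisymm
  · refine opNorm_le_bound _ (norm_nonneg T) fun x => ?_
    rw [norm_absOp_apply]; exact le_opNorm T x
  · refine opNorm_le_bound _ (norm_nonneg _) fun x => ?_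
    rw [← norm_absOp_apply]; exact le_opNorm _ x

/-- If there is a common unit vector attaining the norms of `(1/2)(|T|+|T*|)` and `|T|`
and lying in the kernel of `|T| − |T*|`, then
`(1/(α+β))·‖(α/4)(|T|+|T*|)² + β|T|²‖ = (1/4)‖|T|+|T*|‖² = ‖T‖²` for all `α, β`. -/
theorem abNorm_bound_eq_of_attained (T : H →L[ℂ] H)
    (hx : ∃ x : H, ‖x‖ = 1 ∧
      ‖(((1 / 2 : ℝ) : ℂ) • (absOp T + absOp (adjoint T))) x‖ =
        ‖((1 / 2 : ℝ) : ℂ) • (absOp T + absOp (adjoint T))‖ ∧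
      ‖absOp T x‖ = ‖absOp T‖ ∧ (absOp T - absOp (adjoint T)) x = 0)
    (α β : ℝ) (hα : 0 ≤ α) (hβ : 0 ≤ β) (hαβ : (α, β) ≠ (0, 0)) :
    (1 / (α + β)) * ‖((α / 4 : ℝ) : ℂ) • (absOp T + absOp (adjoint T)) ^ 2 +
        ((β : ℝ) : ℂ) • (absOp T ^ 2)‖ = (1 / 4) * ‖absOp T + absOp (adjoint T)‖ ^ 2 ∧
      (1 / 4) * ‖absOp T + absOp (adjoint T)‖ ^ 2 = ‖T‖ ^ 2 := by
  obtain ⟨x, hx1, hxA, hxB, hxC⟩ := hx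
  set S := absOp T + absOp (adjoint T) with hSdef
  have hSsa : IsSelfAdjoint S :=
    (absOp_isSelfAdjoint T).add (absOp_isSelfAdjoint (adjoint T))
  have hCx : absOp T x = absOp (adjoint T) x := by
    have := hxC; rw [sub_apply, sub_eq_zero] at this; exact this
  -- ‖S x‖ = 2 ‖T‖
  have hBx : ‖absOp T x‖ = ‖T‖ := by rw [hxB, norm_absOp]
  have hSx : ‖S x‖ = 2 * ‖T‖ := by
    have : S x = absOp T x + absOp T x := by
      rw [hSdef, add_apply, ← hCx]
    rw [this, ← two_smul ℝ, norm_smul]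
    simp [hBx]
  have hNS : ‖S‖ = 2 * ‖T‖ := by
    have h2 : ‖((1 / 2 : ℝ) : ℂ) • S‖ = (1/2) * ‖S‖ := by
      rw [norm_smul]; norm_num
    have h3 : ‖(((1 / 2 : ℝ) : ℂ) • S) x‖ = (1/2) * ‖S x‖ := by
      rw [smul_apply, norm_smul]; norm_num
    rw [h3, h2] at hxA
    linarith [hSx ▸ hxA]
  have hTnn : (0:ℝ) ≤ ‖T‖ := norm_nonneg T
  -- Second equality
  have hsecond : (1 / 4) * ‖S‖ ^ 2 = ‖T‖ ^ 2 := by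
    rw [hNS]; ring
  refine ⟨?_, hsecond⟩
  set M := ((α / 4 : ℝ) : ℂ) • S ^ 2 + ((β : ℝ) : ℂ) • (absOp T ^ 2) with hMdef
  have hαβ' : 0 < α + β := by
    rcases lt_or_eq_of_le hα with h | h
    · linarith
    rcases lt_or_eq_of_le hβ with h' | h'
    · linarith
    · exact absurd (by rw [← h, ← h']) hαβ
  -- Upper bound
  have hub : ‖M‖ ≤ (α + β) * ‖T‖ ^ 2 := by
    have h1 : ‖S ^ 2‖ ≤ ‖S‖ ^ 2 := by
      rw [pow_two, pow_two]; exact norm_mul_le S S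
    have h2 : ‖absOp T ^ 2‖ ≤ ‖absOp T‖ ^ 2 := by
      rw [pow_two, pow_two]; exact norm_mul_le _ _
    calc ‖M‖ ≤ ‖((α / 4 : ℝ) : ℂ) • S ^ 2‖ + ‖((β : ℝ) : ℂ) • (absOp T ^ 2)‖ :=
          norm_add_le _ _
      _ = (α/4) * ‖S ^ 2‖ + β * ‖absOp T ^ 2‖ := by
          rw [norm_smul, norm_smul, Complex.norm_real, Complex.norm_real,
            Real.norm_of_nonneg (by linarith), Real.norm_of_nonneg hβ]
      _ ≤ (α/4) * ‖S‖ ^ 2 + β * ‖absOp T‖ ^ 2 := by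
          gcongr
      _ = (α + β) * ‖T‖ ^ 2 := by rw [hNS, norm_absOp]; ring
  -- Lower bound via inner product at x
  have hinner : (inner ℂ (M x) x : ℂ) = ((α/4) * ‖S x‖^2 + β * ‖absOp T x‖^2 : ℝ) := by
    have e1 : (inner ℂ (S x) (S x) : ℂ) = ((‖S x‖^2 : ℝ) : ℂ) := by
      exact_mod_cast inner_self_eq_norm_sq_to_K (𝕜 := ℂ) (S x)
    have e2 : (inner ℂ (absOp T x) (absOp T x) : ℂ) = ((‖absOp T x‖^2 : ℝ) : ℂ) := by
      exact_mod_cast inner_self_eq_norm_sq_to_K (𝕜 := ℂ) (absOp T x)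
    rw [hMdef, add_apply, smul_apply, smul_apply, inner_add_left, inner_smul_left,
      inner_smul_left, pow_two, pow_two, inner_selfAdj_sq S hSsa,
      inner_selfAdj_sq _ (absOp_isSelfAdjoint T), e1, e2, Complex.conj_ofReal,
      Complex.conj_ofReal]
    push_cast
    ring
  have hlb : (α + β) * ‖T‖ ^ 2 ≤ ‖M‖ := by
    have h1 : ‖(inner ℂ (M x) x : ℂ)‖ ≤ ‖M‖ := by
      calc ‖(inner ℂ (M x) x : ℂ)‖ ≤ ‖M x‖ * ‖x‖ := norm_inner_le_norm _ _
        _ ≤ ‖M‖ * ‖x‖ * ‖x‖ := by gcongr; exact le_opNorm M x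
        _ = ‖M‖ := by rw [hx1]; ring
    have h2 : ‖(inner ℂ (M x) x : ℂ)‖ = (α/4) * ‖S x‖^2 + β * ‖absOp T x‖^2 := by
      rw [hinner, Complex.norm_real, Real.norm_of_nonneg (by positivity)]
    rw [h2, hSx, hBx] at h1
    calc (α + β) * ‖T‖ ^ 2 = α/4 * (2*‖T‖)^2 + β * ‖T‖^2 := by ring
      _ ≤ ‖M‖ := h1
  have hMnorm : ‖M‖ = (α + β) * ‖T‖ ^ 2 := le_antisymm hub hlb
  rw [hMnorm, hsecond]
  field_simp
end

section
/- Let T ∈ B(H) and let α, β ≥ 0 with (α,β) ≠ (0,0). Then ‖T‖_{α,β}² ≥ max{ (1/2)·‖ (α/4)(T*T + TT*) + β·T*T ‖, (1/3)·‖ (α/2)(T*T + TT*) + β·T*T ‖ }. -/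
open ContinuousLinearMap

variable {H : Type*} [NormedAddCommGroup H] [InnerProductSpace ℂ H] [CompleteSpace H]

/-- If `‖A x‖ ≤ c` on the unit sphere, then `‖A‖ ≤ c`. -/
lemma unit_norm_le (A : H →L[ℂ] H) {c : ℝ} (hc : 0 ≤ c)
    (h : ∀ x : H, ‖x‖ = 1 → ‖A x‖ ≤ c) : ‖A‖ ≤ c := by
  refine A.opNorm_le_bound hc fun z => ?_
  rcases eq_or_ne z 0 with rfl | hz
  · simp
  · have hnz : (0:ℝ) < ‖z‖ := norm_pos_iff.mpr hz
    have hu : ‖((‖z‖⁻¹ : ℝ) : ℂ) • z‖ = 1 := by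
      rw [norm_smul, Complex.norm_real, Real.norm_eq_abs,
        abs_of_nonneg (by positivity)]
      field_simp
    have h1 := h _ hu
    rw [map_smul, norm_smul, Complex.norm_real, Real.norm_eq_abs,
      abs_of_nonneg (by positivity)] at h1
    calc ‖A z‖ = ‖z‖ * (‖z‖⁻¹ * ‖A z‖) := by field_simp
      _ ≤ ‖z‖ * c := mul_le_mul_of_nonneg_left h1 (le_of_lt hnz)
      _ = c * ‖z‖ := mul_comm _ _

/-- Quadratic scaling of the inner-product bound. -/
lemma inner_quad_bound (A : H →L[ℂ] H) {c : ℝ} (hc : 0 ≤ c)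
    (h : ∀ x : H, ‖x‖ = 1 → ‖(inner ℂ (A x) x : ℂ)‖ ≤ c) :
    ∀ z : H, ‖(inner ℂ (A z) z : ℂ)‖ ≤ c * ‖z‖ ^ 2 := by
  intro z
  rcases eq_or_ne z 0 with rfl | hz
  · simp
  · have hnz : (0:ℝ) < ‖z‖ := norm_pos_iff.mpr hz
    have hu : ‖((‖z‖⁻¹ : ℝ) : ℂ) • z‖ = 1 := by
      rw [norm_smul, Complex.norm_real, Real.norm_eq_abs,
        abs_of_nonneg (by positivity)]
      field_simp
    have h1 := h _ hu
    rw [map_smul, inner_smul_left, inner_smul_right, norm_mul, norm_mul,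
      RCLike.norm_conj, Complex.norm_real, Real.norm_eq_abs,
      abs_of_nonneg (by positivity)] at h1
    have h2 : ‖z‖⁻¹ * (‖z‖⁻¹ * ‖(inner ℂ (A z) z : ℂ)‖) ≤ c := h1
    have h3 : ‖z‖ * ‖z‖ * (‖z‖⁻¹ * (‖z‖⁻¹ * ‖(inner ℂ (A z) z : ℂ)‖)) ≤ ‖z‖ * ‖z‖ * c :=
      mul_le_mul_of_nonneg_left h2 (by positivity)
    have h4 : ‖z‖ * ‖z‖ * (‖z‖⁻¹ * (‖z‖⁻¹ * ‖(inner ℂ (A z) z : ℂ)‖))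
        = ‖(inner ℂ (A z) z : ℂ)‖ := by field_simp
    rw [h4] at h3
    calc ‖(inner ℂ (A z) z : ℂ)‖ ≤ ‖z‖ * ‖z‖ * c := h3
      _ = c * ‖z‖ ^ 2 := by ring

/-- If `A` is self-adjoint and `|⟨Ax,x⟩| ≤ c` on the unit sphere, then `‖A‖ ≤ c`. -/
lemma selfadj_norm_le {A : H →L[ℂ] H} (hA : IsSelfAdjoint A) {c : ℝ} (hc : 0 ≤ c)
    (h : ∀ x : H, ‖x‖ = 1 → ‖(inner ℂ (A x) x : ℂ)‖ ≤ c) : ‖A‖ ≤ c := by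
  have hq := inner_quad_bound A hc h
  have hre : ∀ x y : H, 4 * |(inner ℂ (A x) y : ℂ).re| ≤ 2 * c * (‖x‖ ^ 2 + ‖y‖ ^ 2) := by
    intro x y
    have hyx : (inner ℂ (A y) x : ℂ) = starRingEnd ℂ (inner ℂ (A x) y) := by
      rw [← hA.adjoint_eq, adjoint_inner_left, inner_conj_symm, hA.adjoint_eq]
    have hid : (inner ℂ (A (x + y)) (x + y) : ℂ) - inner ℂ (A (x - y)) (x - y)
        = 4 * (((inner ℂ (A x) y : ℂ).re : ℝ) : ℂ) := by
      have hc2 : (inner ℂ (A x) y : ℂ) + starRingEnd ℂ (inner ℂ (A x) y)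
          = ((2 * (inner ℂ (A x) y : ℂ).re : ℝ) : ℂ) := Complex.add_conj _
      simp only [map_add, map_sub, inner_add_left, inner_add_right,
        inner_sub_left, inner_sub_right, hyx]
      push_cast at hc2 ⊢
      linear_combination 2 * hc2
    have h1 : ‖(inner ℂ (A (x + y)) (x + y) : ℂ) - inner ℂ (A (x - y)) (x - y)‖
        ≤ c * ‖x + y‖ ^ 2 + c * ‖x - y‖ ^ 2 :=
      (norm_sub_le _ _).trans (add_le_add (hq _) (hq _))
    have hpar := parallelogram_law_with_norm ℂ x y
    rw [hid] at h1
    have h2 : ‖(4 * (((inner ℂ (A x) y : ℂ).re : ℝ) : ℂ) : ℂ)‖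
        = 4 * |(inner ℂ (A x) y : ℂ).re| := by
      rw [norm_mul, Complex.norm_real, Real.norm_eq_abs]
      simp
    rw [h2] at h1
    nlinarith [h1, hpar]
  refine unit_norm_le A hc fun x hx => ?_
  rcases eq_or_ne (A x) 0 with h0 | h0
  · simp [h0, hc]
  · have hAx : (0:ℝ) < ‖A x‖ := norm_pos_iff.mpr h0
    set y : H := ((‖A x‖⁻¹ : ℝ) : ℂ) • A x with hy_def
    have hy : ‖y‖ = 1 := by
      rw [hy_def, norm_smul, Complex.norm_real, Real.norm_eq_abs,
        abs_of_nonneg (by positivity)]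
      field_simp
    have hip : (inner ℂ (A x) y : ℂ) = ((‖A x‖ : ℝ) : ℂ) := by
      have hne : ((‖A x‖ : ℝ) : ℂ) ≠ 0 := Complex.ofReal_ne_zero.mpr hAx.ne'
      rw [hy_def, inner_smul_right, inner_self_eq_norm_sq_to_K]
      push_cast
      field_simp
      norm_cast
    have h1 := hre x y
    rw [hip] at h1
    simp only [Complex.ofReal_re, abs_of_nonneg (le_of_lt hAx), hx, hy] at h1
    linarith

/-- Bound `‖T*T + TT*‖` by the numerical radius bound. -/
lemma crux_bound (T : H →L[ℂ] H) {w : ℝ} (hw0 : 0 ≤ w)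
    (hw : ∀ x : H, ‖x‖ = 1 → ‖(inner ℂ (T x) x : ℂ)‖ ≤ w) :
    ‖adjoint T * T + T * adjoint T‖ ≤ 4 * w ^ 2 := by
  set A : H →L[ℂ] H := T + adjoint T with hA_def
  set B : H →L[ℂ] H := Complex.I • (T - adjoint T) with hB_def
  have hAsa : IsSelfAdjoint A := by
    rw [IsSelfAdjoint, hA_def, star_add, star_eq_adjoint, star_eq_adjoint,
      adjoint_adjoint, add_comm]
  have hBsa : IsSelfAdjoint B := by
    rw [IsSelfAdjoint, hB_def, star_smul, star_sub, star_eq_adjoint,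
      star_eq_adjoint, adjoint_adjoint, Complex.star_def, Complex.conj_I,
      neg_smul, ← smul_neg, neg_sub]
  have hconjT : ∀ x : H, (inner ℂ (adjoint T x) x : ℂ)
      = starRingEnd ℂ (inner ℂ (T x) x) := by
    intro x
    rw [adjoint_inner_left, inner_conj_symm]
  have hAin : ∀ x : H, ‖x‖ = 1 → ‖(inner ℂ (A x) x : ℂ)‖ ≤ 2 * w := by
    intro x hx
    rw [hA_def]
    simp only [add_apply, inner_add_left]
    rw [hconjT]
    calc ‖(inner ℂ (T x) x : ℂ) + starRingEnd ℂ (inner ℂ (T x) x)‖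
        ≤ ‖(inner ℂ (T x) x : ℂ)‖ + ‖starRingEnd ℂ (inner ℂ (T x) x)‖ := norm_add_le _ _
      _ = 2 * ‖(inner ℂ (T x) x : ℂ)‖ := by rw [RCLike.norm_conj]; ring
      _ ≤ 2 * w := by linarith [hw x hx]
  have hBin : ∀ x : H, ‖x‖ = 1 → ‖(inner ℂ (B x) x : ℂ)‖ ≤ 2 * w := by
    intro x hx
    rw [hB_def]
    simp only [coe_smul', Pi.smul_apply, sub_apply, inner_smul_left, inner_sub_left]
    rw [hconjT, norm_mul]
    have hI : ‖starRingEnd ℂ Complex.I‖ = 1 := by simp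
    rw [hI, one_mul]
    calc ‖(inner ℂ (T x) x : ℂ) - starRingEnd ℂ (inner ℂ (T x) x)‖
        ≤ ‖(inner ℂ (T x) x : ℂ)‖ + ‖starRingEnd ℂ (inner ℂ (T x) x)‖ := norm_sub_le _ _
      _ = 2 * ‖(inner ℂ (T x) x : ℂ)‖ := by rw [RCLike.norm_conj]; ring
      _ ≤ 2 * w := by linarith [hw x hx]
  have hAn : ‖A‖ ≤ 2 * w := selfadj_norm_le hAsa (by positivity) hAin
  have hBn : ‖B‖ ≤ 2 * w := selfadj_norm_le hBsa (by positivity) hBin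
  have hCsa : IsSelfAdjoint (adjoint T * T + T * adjoint T) := by
    rw [IsSelfAdjoint, star_add, star_mul, star_mul, star_eq_adjoint,
      star_eq_adjoint, adjoint_adjoint, add_comm]
  have hCin : ∀ x : H, ‖x‖ = 1 →
      ‖(inner ℂ ((adjoint T * T + T * adjoint T) x) x : ℂ)‖ ≤ 4 * w ^ 2 := by
    intro x hx
    have e1 : (inner ℂ ((adjoint T * T + T * adjoint T) x) x : ℂ)
        = ((‖T x‖ ^ 2 + ‖adjoint T x‖ ^ 2 : ℝ) : ℂ) := by
      simp only [add_apply, mul_apply_eq_comp, inner_add_left]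
      rw [adjoint_inner_left, ← adjoint_inner_right T (adjoint T x) x,
        inner_self_eq_norm_sq_to_K, inner_self_eq_norm_sq_to_K]
      push_cast
      rfl
    rw [e1, Complex.norm_real, Real.norm_eq_abs, abs_of_nonneg (by positivity)]
    have hApt : ‖A x‖ ≤ 2 * w := by
      calc ‖A x‖ ≤ ‖A‖ * ‖x‖ := A.le_opNorm x
        _ = ‖A‖ := by rw [hx, mul_one]
        _ ≤ 2 * w := hAn
    have hBpt : ‖B x‖ ≤ 2 * w := by
      calc ‖B x‖ ≤ ‖B‖ * ‖x‖ := B.le_opNorm x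
        _ = ‖B‖ := by rw [hx, mul_one]
        _ ≤ 2 * w := hBn
    have hAe : ‖A x‖ = ‖T x + adjoint T x‖ := by rw [hA_def]; simp
    have hBe : ‖B x‖ = ‖T x - adjoint T x‖ := by
      rw [hB_def]
      simp only [coe_smul', Pi.smul_apply, sub_apply, norm_smul]
      simp
    have hpar := parallelogram_law_with_norm ℂ (T x) (adjoint T x)
    rw [← hAe, ← hBe] at hpar
    nlinarith [norm_nonneg (A x), norm_nonneg (B x)]
  exact selfadj_norm_le hCsa (by positivity) hCin

set_option maxHeartbeats 800000 in
/-- Lower bounds for `‖T‖²_{α,β}` in terms of `T*T + TT*`. -/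
theorem abNorm_sq_ge (T : H →L[ℂ] H) (α β : ℝ) (hα : 0 ≤ α) (hβ : 0 ≤ β)
    (hαβ : (α, β) ≠ (0, 0)) :
    abNorm α β T ^ 2 ≥
      max ((1 / 2) * ‖((α / 4 : ℝ) : ℂ) • (adjoint T * T + T * adjoint T) +
              ((β : ℝ) : ℂ) • (adjoint T * T)‖)
          ((1 / 3) * ‖((α / 2 : ℝ) : ℂ) • (adjoint T * T + T * adjoint T) +
              ((β : ℝ) : ℂ) • (adjoint T * T)‖) := by
  by_cases htriv : Subsingleton H
  · have hT : T = 0 := by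
      ext x
      exact Subsingleton.elim _ _
    have hmax : max ((1 / 2) * ‖((α / 4 : ℝ) : ℂ) • (adjoint T * T + T * adjoint T) +
              ((β : ℝ) : ℂ) • (adjoint T * T)‖)
          ((1 / 3) * ‖((α / 2 : ℝ) : ℂ) • (adjoint T * T + T * adjoint T) +
              ((β : ℝ) : ℂ) • (adjoint T * T)‖) = 0 := by
      simp [hT]
    rw [ge_iff_le, hmax]
    exact sq_nonneg _
  · have : Nontrivial H := not_subsingleton_iff_nontrivial.mp htriv
    set N := abNorm α β T with hN_def
    set S := {r : ℝ | ∃ x : H, ‖x‖ = 1 ∧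
      r = Real.sqrt (α * ‖(inner ℂ (T x) x : ℂ)‖ ^ 2 + β * ‖T x‖ ^ 2)} with hS_def
    have hbdd : BddAbove S := by
      refine ⟨Real.sqrt (α * ‖T‖ ^ 2 + β * ‖T‖ ^ 2), fun r hr => ?_⟩
      obtain ⟨x, hx, rfl⟩ := hr
      apply Real.sqrt_le_sqrt
      have h1 : ‖(inner ℂ (T x) x : ℂ)‖ ≤ ‖T‖ := by
        calc ‖(inner ℂ (T x) x : ℂ)‖ ≤ ‖T x‖ * ‖x‖ := norm_inner_le_norm _ _
          _ = ‖T x‖ := by rw [hx, mul_one]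
          _ ≤ ‖T‖ * ‖x‖ := T.le_opNorm x
          _ = ‖T‖ := by rw [hx, mul_one]
      have h2 : ‖T x‖ ≤ ‖T‖ := by
        calc ‖T x‖ ≤ ‖T‖ * ‖x‖ := T.le_opNorm x
          _ = ‖T‖ := by rw [hx, mul_one]
      have t1 : ‖(inner ℂ (T x) x : ℂ)‖ ^ 2 ≤ ‖T‖ ^ 2 := pow_le_pow_left₀ (norm_nonneg _) h1 2
      have t2 : ‖T x‖ ^ 2 ≤ ‖T‖ ^ 2 := pow_le_pow_left₀ (norm_nonneg _) h2 2
      have := mul_le_mul_of_nonneg_left t1 hα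
      have := mul_le_mul_of_nonneg_left t2 hβ
      linarith
    have key : ∀ x : H, ‖x‖ = 1 →
        α * ‖(inner ℂ (T x) x : ℂ)‖ ^ 2 + β * ‖T x‖ ^ 2 ≤ N ^ 2 := by
      intro x hx
      have hmem : Real.sqrt (α * ‖(inner ℂ (T x) x : ℂ)‖ ^ 2 + β * ‖T x‖ ^ 2) ∈ S :=
        ⟨x, hx, rfl⟩
      have hle : Real.sqrt (α * ‖(inner ℂ (T x) x : ℂ)‖ ^ 2 + β * ‖T x‖ ^ 2) ≤ N :=
        le_csSup hbdd hmem
      have hnn : 0 ≤ α * ‖(inner ℂ (T x) x : ℂ)‖ ^ 2 + β * ‖T x‖ ^ 2 := by positivity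
      calc α * ‖(inner ℂ (T x) x : ℂ)‖ ^ 2 + β * ‖T x‖ ^ 2
          = Real.sqrt (α * ‖(inner ℂ (T x) x : ℂ)‖ ^ 2 + β * ‖T x‖ ^ 2) ^ 2 :=
            (Real.sq_sqrt hnn).symm
        _ ≤ N ^ 2 := pow_le_pow_left₀ (Real.sqrt_nonneg _) hle 2
    have hN2 : (0:ℝ) ≤ N ^ 2 := sq_nonneg N
    -- β bound
    have hbeta : β * ‖T‖ ^ 2 ≤ N ^ 2 := by
      rcases eq_or_lt_of_le hβ with h0 | h0
      · rw [← h0]; simpa using hN2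
      · have hTb : ‖T‖ ≤ Real.sqrt (N ^ 2 / β) := by
          refine unit_norm_le T (Real.sqrt_nonneg _) fun x hx => ?_
          have h1 := key x hx
          have h2 : ‖T x‖ ^ 2 ≤ N ^ 2 / β := by
            rw [le_div_iff₀ h0]
            nlinarith [sq_nonneg ‖(inner ℂ (T x) x : ℂ)‖]
          calc ‖T x‖ = Real.sqrt (‖T x‖ ^ 2) := (Real.sqrt_sq (norm_nonneg _)).symm
            _ ≤ Real.sqrt (N ^ 2 / β) := Real.sqrt_le_sqrt h2
        have h3 : ‖T‖ ^ 2 ≤ N ^ 2 / β := by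
          calc ‖T‖ ^ 2 ≤ Real.sqrt (N ^ 2 / β) ^ 2 :=
                pow_le_pow_left₀ (norm_nonneg _) hTb 2
            _ = N ^ 2 / β := Real.sq_sqrt (by positivity)
        calc β * ‖T‖ ^ 2 ≤ β * (N ^ 2 / β) :=
              mul_le_mul_of_nonneg_left h3 hβ
          _ = N ^ 2 := by field_simp
    -- α bound
    have halpha : α * ‖adjoint T * T + T * adjoint T‖ ≤ 4 * N ^ 2 := by
      rcases eq_or_lt_of_le hα with h0 | h0
      · rw [← h0]; simpa using by linarith
      · set w := Real.sqrt (N ^ 2 / α) with hw_def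
        have hw0 : 0 ≤ w := Real.sqrt_nonneg _
        have hw2 : w ^ 2 = N ^ 2 / α := Real.sq_sqrt (by positivity)
        have hw : ∀ x : H, ‖x‖ = 1 → ‖(inner ℂ (T x) x : ℂ)‖ ≤ w := by
          intro x hx
          have h1 := key x hx
          have h2 : ‖(inner ℂ (T x) x : ℂ)‖ ^ 2 ≤ N ^ 2 / α := by
            rw [le_div_iff₀ h0]
            nlinarith [sq_nonneg ‖T x‖]
          calc ‖(inner ℂ (T x) x : ℂ)‖
              = Real.sqrt (‖(inner ℂ (T x) x : ℂ)‖ ^ 2) := (Real.sqrt_sq (norm_nonneg _)).symm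
            _ ≤ w := Real.sqrt_le_sqrt h2
        have hCn : ‖adjoint T * T + T * adjoint T‖ ≤ 4 * w ^ 2 :=
          crux_bound T hw0 hw
        calc α * ‖adjoint T * T + T * adjoint T‖ ≤ α * (4 * w ^ 2) :=
              mul_le_mul_of_nonneg_left hCn hα
          _ = α * (4 * (N ^ 2 / α)) := by rw [hw2]
          _ = 4 * N ^ 2 := by field_simp
    -- assemble
    have hD : ‖adjoint T * T‖ = ‖T‖ ^ 2 := by
      rw [mul_def, norm_adjoint_comp_self, sq]
    have hC0 : (0:ℝ) ≤ ‖adjoint T * T + T * adjoint T‖ := norm_nonneg _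
    rw [ge_iff_le, max_le_iff]
    constructor
    · have tri : ‖((α / 4 : ℝ) : ℂ) • (adjoint T * T + T * adjoint T) +
          ((β : ℝ) : ℂ) • (adjoint T * T)‖
          ≤ (α / 4) * ‖adjoint T * T + T * adjoint T‖ + β * ‖T‖ ^ 2 := by
        calc ‖((α / 4 : ℝ) : ℂ) • (adjoint T * T + T * adjoint T) +
            ((β : ℝ) : ℂ) • (adjoint T * T)‖
            ≤ ‖((α / 4 : ℝ) : ℂ) • (adjoint T * T + T * adjoint T)‖ +
              ‖((β : ℝ) : ℂ) • (adjoint T * T)‖ := norm_add_le _ _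
          _ = (α / 4) * ‖adjoint T * T + T * adjoint T‖ + β * ‖T‖ ^ 2 := by
              rw [norm_smul, norm_smul, Complex.norm_real, Complex.norm_real,
                Real.norm_eq_abs, Real.norm_eq_abs, abs_of_nonneg (by positivity),
                abs_of_nonneg hβ, hD]
      linarith
    · have tri : ‖((α / 2 : ℝ) : ℂ) • (adjoint T * T + T * adjoint T) +
          ((β : ℝ) : ℂ) • (adjoint T * T)‖
          ≤ (α / 2) * ‖adjoint T * T + T * adjoint T‖ + β * ‖T‖ ^ 2 := by
        calc ‖((α / 2 : ℝ) : ℂ) • (adjoint T * T + T * adjoint T) +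
            ((β : ℝ) : ℂ) • (adjoint T * T)‖
            ≤ ‖((α / 2 : ℝ) : ℂ) • (adjoint T * T + T * adjoint T)‖ +
              ‖((β : ℝ) : ℂ) • (adjoint T * T)‖ := norm_add_le _ _
          _ = (α / 2) * ‖adjoint T * T + T * adjoint T‖ + β * ‖T‖ ^ 2 := by
              rw [norm_smul, norm_smul, Complex.norm_real, Complex.norm_real,
                Real.norm_eq_abs, Real.norm_eq_abs, abs_of_nonneg (by positivity),
                abs_of_nonneg hβ, hD]
      linarith
end

section
/- Let T ∈ B(H) and let α, β ≥ 0 with (α,β) ≠ (0,0). Then ‖T‖_{α,β}² ≤ ‖ (α/2)(T*T + TT*) + β·T*T ‖, and consequently w(T)² ≤ (1/(α+β)) · ‖ (α/2)(T*T + TT*) + β·T*T ‖. -/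
open ContinuousLinearMap

variable {H : Type*} [NormedAddCommGroup H] [InnerProductSpace ℂ H] [CompleteSpace H]

lemma key_ineq_s17 (T : H →L[ℂ] H) (α β : ℝ) (hα : 0 ≤ α) (hβ : 0 ≤ β) (x : H)
    (hx : ‖x‖ = 1) :
    α * ‖(inner ℂ (T x) x : ℂ)‖ ^ 2 + β * ‖T x‖ ^ 2 ≤
      ‖((α / 2 : ℝ) : ℂ) • (adjoint T * T + T * adjoint T) +
        ((β : ℝ) : ℂ) • (adjoint T * T)‖ := by
  set S : H →L[ℂ] H := ((α / 2 : ℝ) : ℂ) • (adjoint T * T + T * adjoint T) +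
        ((β : ℝ) : ℂ) • (adjoint T * T) with hS
  set a := ‖T x‖ with ha
  set b := ‖adjoint T x‖ with hb
  set c := ‖(inner ℂ (T x) x : ℂ)‖ with hc
  have ha0 : 0 ≤ a := norm_nonneg _
  have hb0 : 0 ≤ b := norm_nonneg _
  have hc0 : 0 ≤ c := norm_nonneg _
  have hval : (inner ℂ (S x) x : ℂ) = ((α/2 * (a^2 + b^2) + β * a^2 : ℝ) : ℂ) := by
    have h1 : (inner ℂ ((adjoint T * T) x) x : ℂ) = ((‖T x‖:ℂ))^2 := by
      rw [ContinuousLinearMap.mul_apply, adjoint_inner_left, inner_self_eq_norm_sq_to_K]; norm_cast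
    have h2 : (inner ℂ ((T * adjoint T) x) x : ℂ) = ((‖adjoint T x‖:ℂ))^2 := by
      rw [ContinuousLinearMap.mul_apply, show T ((adjoint T) x) = adjoint (adjoint T) ((adjoint T) x) by
        rw [adjoint_adjoint], adjoint_inner_left, inner_self_eq_norm_sq_to_K]; norm_cast
    simp only [hS, add_apply, smul_apply, inner_add_left, inner_smul_left, h1, h2,
      Complex.conj_ofReal, ha, hb]
    push_cast
    ring
  have hca : c ≤ a := by
    calc c ≤ ‖T x‖ * ‖x‖ := norm_inner_le_norm _ _
    _ = a := by rw [hx, mul_one]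
  have hcb : c ≤ b := by
    have : (inner ℂ x (T x) : ℂ) = inner ℂ (adjoint T x) x := by
      rw [show T x = adjoint (adjoint T) x by rw [adjoint_adjoint], adjoint_inner_right]
    have hcc : c = ‖(inner ℂ (adjoint T x) x : ℂ)‖ := by
      rw [hc, ← inner_conj_symm, RCLike.norm_conj, this]
    calc c = ‖(inner ℂ (adjoint T x) x : ℂ)‖ := hcc
    _ ≤ ‖adjoint T x‖ * ‖x‖ := norm_inner_le_norm _ _
    _ = b := by rw [hx, mul_one]
  have hc2 : c^2 ≤ (a^2 + b^2)/2 := by nlinarith [sq_nonneg (a - b)]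
  have step1 : α * c^2 + β * a^2 ≤ α/2 * (a^2 + b^2) + β * a^2 := by nlinarith
  have step2 : α/2 * (a^2 + b^2) + β * a^2 = ‖(inner ℂ (S x) x : ℂ)‖ := by
    rw [hval, Complex.norm_real, Real.norm_eq_abs, abs_of_nonneg (by positivity)]
  have step3 : ‖(inner ℂ (S x) x : ℂ)‖ ≤ ‖S‖ := by
    calc ‖(inner ℂ (S x) x : ℂ)‖ ≤ ‖S x‖ * ‖x‖ := norm_inner_le_norm _ _
    _ ≤ (‖S‖ * ‖x‖) * ‖x‖ := by
        gcongr; exact le_opNorm S x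
    _ = ‖S‖ := by rw [hx]; ring
  linarith

/-- `‖T‖²_{α,β} ≤ ‖(α/2)(T*T + TT*) + βT*T‖`, hence
`w(T)² ≤ (1/(α+β))·‖(α/2)(T*T + TT*) + βT*T‖`. -/
theorem abNorm_sq_le (T : H →L[ℂ] H) (α β : ℝ) (hα : 0 ≤ α) (hβ : 0 ≤ β)
    (hαβ : (α, β) ≠ (0, 0)) :
    abNorm α β T ^ 2 ≤ ‖((α / 2 : ℝ) : ℂ) • (adjoint T * T + T * adjoint T) +
        ((β : ℝ) : ℂ) • (adjoint T * T)‖ ∧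
      numRad T ^ 2 ≤ (1 / (α + β)) *
        ‖((α / 2 : ℝ) : ℂ) • (adjoint T * T + T * adjoint T) +
          ((β : ℝ) : ℂ) • (adjoint T * T)‖ := by
  set S : H →L[ℂ] H := ((α / 2 : ℝ) : ℂ) • (adjoint T * T + T * adjoint T) +
        ((β : ℝ) : ℂ) • (adjoint T * T) with hS
  have hS0 : (0:ℝ) ≤ ‖S‖ := norm_nonneg _
  have hab : 0 < α + β := by
    rcases lt_or_eq_of_le hα with h | h
    · linarith
    rcases lt_or_eq_of_le hβ with h' | h'
    · linarith
    · exact absurd (by rw [← h, ← h']) hαβ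
  constructor
  · -- abNorm part
    have hle : abNorm α β T ≤ Real.sqrt ‖S‖ := by
      apply Real.sSup_le
      · rintro r ⟨x, hx, rfl⟩
        exact Real.sqrt_le_sqrt (key_ineq_s17 T α β hα hβ x hx)
      · exact Real.sqrt_nonneg _
    have h0 : 0 ≤ abNorm α β T := by
      apply Real.sSup_nonneg
      rintro r ⟨x, hx, rfl⟩
      exact Real.sqrt_nonneg _
    calc abNorm α β T ^ 2 ≤ Real.sqrt ‖S‖ ^ 2 := by gcongr
    _ = ‖S‖ := Real.sq_sqrt hS0
  · -- numerical radius part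
    have hle : numRad T ≤ Real.sqrt (‖S‖ / (α + β)) := by
      apply Real.sSup_le
      · rintro r ⟨x, hx, rfl⟩
        have hkey := key_ineq_s17 T α β hα hβ x hx
        rw [← hS] at hkey
        have hca : ‖(inner ℂ (T x) x : ℂ)‖ ≤ ‖T x‖ := by
          calc ‖(inner ℂ (T x) x : ℂ)‖ ≤ ‖T x‖ * ‖x‖ := norm_inner_le_norm _ _
          _ = ‖T x‖ := by rw [hx, mul_one]
        have hc2 : ‖(inner ℂ (T x) x : ℂ)‖ ^ 2 ≤ ‖T x‖ ^ 2 :=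
          pow_le_pow_left₀ (norm_nonneg _) hca 2
        have h2 : (α + β) * ‖(inner ℂ (T x) x : ℂ)‖ ^ 2 ≤ ‖S‖ := by
          have := mul_le_mul_of_nonneg_left hc2 hβ
          nlinarith
        rw [show ‖(inner ℂ (T x) x : ℂ)‖ =
            Real.sqrt (‖(inner ℂ (T x) x : ℂ)‖ ^ 2) from (Real.sqrt_sq (norm_nonneg _)).symm]
        apply Real.sqrt_le_sqrt
        rw [le_div_iff₀ hab]
        linarith
      · exact Real.sqrt_nonneg _
    have h0 : 0 ≤ numRad T := by
      apply Real.sSup_nonneg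
      rintro r ⟨x, hx, rfl⟩
      exact norm_nonneg _
    calc numRad T ^ 2 ≤ Real.sqrt (‖S‖ / (α + β)) ^ 2 := by gcongr
    _ = ‖S‖ / (α + β) := Real.sq_sqrt (by positivity)
    _ = (1 / (α + β)) * ‖S‖ := by ring
end

section
/- Let T ∈ B(H) and let α, β ≥ 0 with (α,β) ≠ (0,0). Then ‖T‖_{α,β}² ≤ (α/2)·w(T²) + ‖ (α/4)(T*T + TT*) + β·T*T ‖, and consequently w(T)² ≤ (1/(α+β)) · [ (α/2)·w(T²) + ‖ (α/4)(T*T + TT*) + β·T*T ‖ ]. -/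
open ContinuousLinearMap

variable {H : Type*} [NormedAddCommGroup H] [InnerProductSpace ℂ H] [CompleteSpace H]

lemma buzano_aux {a e : H} (he : ‖e‖ = 1) :
    ‖(2 : ℂ) • (inner ℂ e a : ℂ) • e - a‖ = ‖a‖ := by
  have h : ‖(2 : ℂ) • (inner ℂ e a : ℂ) • e - a‖ ^ 2 = ‖a‖ ^ 2 := by
    rw [@norm_sub_sq ℂ H _ _]
    have h2 : ‖(2 : ℂ) • (inner ℂ e a : ℂ) • e‖ ^ 2 = 4 * ‖(inner ℂ e a : ℂ)‖ ^ 2 := by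
      simp [norm_smul, he]; ring
    have h3 : (RCLike.re (inner ℂ ((2 : ℂ) • (inner ℂ e a : ℂ) • e) a : ℂ))
        = 2 * ‖(inner ℂ e a : ℂ)‖ ^ 2 := by
      rw [inner_smul_left, inner_smul_left]
      have h4 : (starRingEnd ℂ) ((2:ℂ)) * ((starRingEnd ℂ) (inner ℂ e a : ℂ) * (inner ℂ e a : ℂ))
          = ((2 * ‖(inner ℂ e a : ℂ)‖ ^ 2 : ℝ) : ℂ) := by
        rw [RCLike.conj_mul, map_ofNat]; push_cast; norm_num
      rw [h4]
      exact Complex.ofReal_re _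
    rw [h2, h3]; ring
  rw [← Real.sqrt_sq (norm_nonneg ((2 : ℂ) • (inner ℂ e a : ℂ) • e - a)), h,
    Real.sqrt_sq (norm_nonneg a)]

lemma buzano {a b e : H} (he : ‖e‖ = 1) :
    ‖(inner ℂ a e : ℂ) * inner ℂ e b‖ ≤ (‖a‖ * ‖b‖ + ‖(inner ℂ a b : ℂ)‖) / 2 := by
  have key : (inner ℂ ((2 : ℂ) • (inner ℂ e a : ℂ) • e - a) b : ℂ) + inner ℂ a b
      = 2 * ((inner ℂ a e : ℂ) * inner ℂ e b) := by
    rw [inner_sub_left, inner_smul_left, inner_smul_left, inner_conj_symm]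
    have : (starRingEnd ℂ) ((2:ℂ)) = 2 := map_ofNat _ 2
    rw [this]; ring
  have h1 : ‖(2 : ℂ) * ((inner ℂ a e : ℂ) * inner ℂ e b)‖
      ≤ ‖a‖ * ‖b‖ + ‖(inner ℂ a b : ℂ)‖ := by
    rw [← key]
    calc ‖(inner ℂ ((2 : ℂ) • (inner ℂ e a : ℂ) • e - a) b : ℂ) + inner ℂ a b‖
        ≤ ‖(inner ℂ ((2 : ℂ) • (inner ℂ e a : ℂ) • e - a) b : ℂ)‖ + ‖(inner ℂ a b : ℂ)‖ :=
          norm_add_le _ _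
      _ ≤ ‖(2 : ℂ) • (inner ℂ e a : ℂ) • e - a‖ * ‖b‖ + ‖(inner ℂ a b : ℂ)‖ := by
          gcongr; exact norm_inner_le_norm _ _
      _ = ‖a‖ * ‖b‖ + ‖(inner ℂ a b : ℂ)‖ := by rw [buzano_aux he]
  rw [norm_mul] at h1
  simp only [Complex.norm_ofNat] at h1  -- ‖(2:ℂ)‖ = 2
  linarith

lemma numRad_nonneg (T : H →L[ℂ] H) : 0 ≤ numRad T :=
  Real.sSup_nonneg (by rintro r ⟨x, hx, rfl⟩; positivity)

lemma numRad_bddAbove (T : H →L[ℂ] H) :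
    BddAbove {r : ℝ | ∃ x : H, ‖x‖ = 1 ∧ r = ‖(inner ℂ (T x) x : ℂ)‖} := by
  refine ⟨‖T‖, ?_⟩
  rintro r ⟨x, hx, rfl⟩
  calc ‖(inner ℂ (T x) x : ℂ)‖ ≤ ‖T x‖ * ‖x‖ := norm_inner_le_norm _ _
    _ ≤ ‖T‖ * ‖x‖ * ‖x‖ := by gcongr; exact le_opNorm T x
    _ = ‖T‖ := by rw [hx]; ring

lemma le_numRad (T : H →L[ℂ] H) {x : H} (hx : ‖x‖ = 1) :
    ‖(inner ℂ (T x) x : ℂ)‖ ≤ numRad T :=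
  le_csSup (numRad_bddAbove T) ⟨x, hx, rfl⟩

/-- `‖T‖²_{α,β} ≤ (α/2)w(T²) + ‖(α/4)(T*T + TT*) + βT*T‖`, hence
`w(T)² ≤ (1/(α+β))·[(α/2)w(T²) + ‖(α/4)(T*T + TT*) + βT*T‖]`. -/
theorem abNorm_sq_le_numRad_sq (T : H →L[ℂ] H) (α β : ℝ) (hα : 0 ≤ α) (hβ : 0 ≤ β)
    (hαβ : (α, β) ≠ (0, 0)) :
    abNorm α β T ^ 2 ≤ (α / 2) * numRad (T ^ 2) +
        ‖((α / 4 : ℝ) : ℂ) • (adjoint T * T + T * adjoint T) +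
          ((β : ℝ) : ℂ) • (adjoint T * T)‖ ∧
      numRad T ^ 2 ≤ (1 / (α + β)) * ((α / 2) * numRad (T ^ 2) +
        ‖((α / 4 : ℝ) : ℂ) • (adjoint T * T + T * adjoint T) +
          ((β : ℝ) : ℂ) • (adjoint T * T)‖) := by
  set S : H →L[ℂ] H := ((α / 4 : ℝ) : ℂ) • (adjoint T * T + T * adjoint T) +
      ((β : ℝ) : ℂ) • (adjoint T * T) with hS
  set C : ℝ := (α / 2) * numRad (T ^ 2) + ‖S‖ with hC
  have hC0 : 0 ≤ C := by
    have := numRad_nonneg (T ^ 2)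
    have : (0:ℝ) ≤ ‖S‖ := norm_nonneg _
    positivity
  -- key pointwise estimate
  have key : ∀ x : H, ‖x‖ = 1 →
      α * ‖(inner ℂ (T x) x : ℂ)‖ ^ 2 + β * ‖T x‖ ^ 2 ≤ C := by
    intro x hx
    -- Buzano with a = T x, b = (adjoint T) x, e = x
    have hbz := buzano (a := T x) (b := (adjoint T) x) (e := x) hx
    have h1 : (inner ℂ x ((adjoint T) x) : ℂ) = inner ℂ (T x) x := by
      rw [adjoint_inner_right]
    have h2 : (inner ℂ (T x) ((adjoint T) x) : ℂ) = inner ℂ ((T ^ 2) x) x := by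
      rw [adjoint_inner_right]
      simp [pow_two]
    rw [h1, h2, ← pow_two, norm_pow] at hbz
    -- ⟪S x, x⟫ value
    have hTT : (inner ℂ ((adjoint T * T) x) x : ℂ) = (‖T x‖ : ℂ) ^ 2 := by
      rw [ContinuousLinearMap.mul_apply]
      rw [adjoint_inner_left]
      exact_mod_cast inner_self_eq_norm_sq_to_K (𝕜 := ℂ) (T x)
    have hTT' : (inner ℂ ((T * adjoint T) x) x : ℂ) = (‖(adjoint T) x‖ : ℂ) ^ 2 := by
      rw [ContinuousLinearMap.mul_apply]
      rw [← adjoint_inner_right]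
      exact_mod_cast inner_self_eq_norm_sq_to_K (𝕜 := ℂ) ((adjoint T) x)
    have hSx : (inner ℂ (S x) x : ℂ)
        = ((α / 4 * (‖T x‖ ^ 2 + ‖(adjoint T) x‖ ^ 2) + β * ‖T x‖ ^ 2 : ℝ) : ℂ) := by
      rw [hS]
      simp only [add_apply, coe_smul', Pi.smul_apply, inner_smul_left, inner_add_left,
        ContinuousLinearMap.add_apply]
      rw [hTT, hTT']
      simp only [Complex.conj_ofReal]
      push_cast
      ring
    have hSle : α / 4 * (‖T x‖ ^ 2 + ‖(adjoint T) x‖ ^ 2) + β * ‖T x‖ ^ 2 ≤ ‖S‖ := by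
      have := norm_inner_le_norm (𝕜 := ℂ) (S x) x
      rw [hSx] at this
      rw [Complex.norm_real] at this
      have h3 : α / 4 * (‖T x‖ ^ 2 + ‖(adjoint T) x‖ ^ 2) + β * ‖T x‖ ^ 2
          ≤ |α / 4 * (‖T x‖ ^ 2 + ‖(adjoint T) x‖ ^ 2) + β * ‖T x‖ ^ 2| := le_abs_self _
      calc α / 4 * (‖T x‖ ^ 2 + ‖(adjoint T) x‖ ^ 2) + β * ‖T x‖ ^ 2
          ≤ ‖S x‖ * ‖x‖ := by
            rw [Real.norm_eq_abs] at this; linarith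
        _ ≤ ‖S‖ * ‖x‖ * ‖x‖ := by gcongr; exact le_opNorm S x
        _ = ‖S‖ := by rw [hx]; ring
    have hw : ‖(inner ℂ ((T ^ 2) x) x : ℂ)‖ ≤ numRad (T ^ 2) := le_numRad _ hx
    have hprod : ‖T x‖ * ‖(adjoint T) x‖
        ≤ (‖T x‖ ^ 2 + ‖(adjoint T) x‖ ^ 2) / 2 := by nlinarith [sq_nonneg (‖T x‖ - ‖(adjoint T) x‖)]
    have hbz2 : ‖(inner ℂ (T x) x : ℂ)‖ ^ 2
        ≤ ((‖T x‖ ^ 2 + ‖(adjoint T) x‖ ^ 2) / 2 + numRad (T ^ 2)) / 2 := by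
      calc ‖(inner ℂ (T x) x : ℂ)‖ ^ 2
          ≤ (‖T x‖ * ‖(adjoint T) x‖ + ‖(inner ℂ ((T ^ 2) x) x : ℂ)‖) / 2 := hbz
        _ ≤ ((‖T x‖ ^ 2 + ‖(adjoint T) x‖ ^ 2) / 2 + numRad (T ^ 2)) / 2 := by
            gcongr
    calc α * ‖(inner ℂ (T x) x : ℂ)‖ ^ 2 + β * ‖T x‖ ^ 2
        ≤ α * (((‖T x‖ ^ 2 + ‖(adjoint T) x‖ ^ 2) / 2 + numRad (T ^ 2)) / 2)
            + β * ‖T x‖ ^ 2 := by gcongr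
      _ = (α / 2) * numRad (T ^ 2)
            + (α / 4 * (‖T x‖ ^ 2 + ‖(adjoint T) x‖ ^ 2) + β * ‖T x‖ ^ 2) := by ring
      _ ≤ (α / 2) * numRad (T ^ 2) + ‖S‖ := by linarith
      _ = C := hC.symm
  -- Part 1
  have part1 : abNorm α β T ^ 2 ≤ C := by
    have hub : abNorm α β T ≤ Real.sqrt C := by
      apply Real.sSup_le
      · rintro r ⟨x, hx, rfl⟩
        exact Real.sqrt_le_sqrt (key x hx)
      · exact Real.sqrt_nonneg _
    have hnn : 0 ≤ abNorm α β T :=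
      Real.sSup_nonneg (by rintro r ⟨x, hx, rfl⟩; positivity)
    calc abNorm α β T ^ 2 ≤ Real.sqrt C ^ 2 := by gcongr
      _ = C := Real.sq_sqrt hC0
  refine ⟨part1, ?_⟩
  -- Part 2
  have hsum : 0 < α + β := by
    rcases lt_or_eq_of_le hα with h | h
    · linarith
    rcases lt_or_eq_of_le hβ with h' | h'
    · linarith
    · exact absurd (by rw [← h, ← h']) hαβ
  have hub : numRad T ≤ Real.sqrt (C / (α + β)) := by
    apply Real.sSup_le
    · rintro r ⟨x, hx, rfl⟩
      have hcs : ‖(inner ℂ (T x) x : ℂ)‖ ≤ ‖T x‖ := by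
        calc ‖(inner ℂ (T x) x : ℂ)‖ ≤ ‖T x‖ * ‖x‖ := norm_inner_le_norm _ _
          _ = ‖T x‖ := by rw [hx, mul_one]
      have h0 : (α + β) * ‖(inner ℂ (T x) x : ℂ)‖ ^ 2 ≤ C := by
        have hk := key x hx
        have hm : ‖(inner ℂ (T x) x : ℂ)‖ * ‖(inner ℂ (T x) x : ℂ)‖ ≤ ‖T x‖ * ‖T x‖ :=
          mul_le_mul hcs hcs (norm_nonneg _) (norm_nonneg _)
        have hm2 : β * (‖(inner ℂ (T x) x : ℂ)‖ * ‖(inner ℂ (T x) x : ℂ)‖)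
            ≤ β * (‖T x‖ * ‖T x‖) := mul_le_mul_of_nonneg_left hm hβ
        nlinarith [hm2, hk]
      have : ‖(inner ℂ (T x) x : ℂ)‖ ^ 2 ≤ C / (α + β) := by
        rw [le_div_iff₀ hsum]; linarith [h0]
      calc ‖(inner ℂ (T x) x : ℂ)‖ = Real.sqrt (‖(inner ℂ (T x) x : ℂ)‖ ^ 2) := by
            rw [Real.sqrt_sq (norm_nonneg _)]
        _ ≤ Real.sqrt (C / (α + β)) := Real.sqrt_le_sqrt this
    · exact Real.sqrt_nonneg _
  have hnn : 0 ≤ numRad T := numRad_nonneg T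
  calc numRad T ^ 2 ≤ Real.sqrt (C / (α + β)) ^ 2 := by gcongr
    _ = C / (α + β) := Real.sq_sqrt (by positivity)
    _ = (1 / (α + β)) * C := by ring
end
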